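/- arXiv:2310.14770 — 6 statements merged into one kernel-verified Lean document; each statement's English description precedes it below -/
import Mathlib

section
/- Theorem (H-consistency bound for cross-entropy score-based surrogates, conditional form, case μ ∈ [1,2)). For every μ ∈ [1,2), every conditional probability vector p, and every score vector v ∈ ℝ^{n+1}, the abstention calibration gap is bounded by the surrogate calibration gap as ΔC_abs(v,p) ≤ sqrt( 2 · (2 − c) · (n+1)^{μ−1} · ΔC_μ(v,p) ). In particular, for the logistic (cross-entropy) case μ = 1 this reads ΔC_abs(v,p) ≤ sqrt(2(2−c) ΔC_1(v,p)). This is the conditional form, over a symmetric and complete hypothesis set, of the H-consistency bound with Γ_μ(t) = sqrt(2(2−c)(n+1)^{μ−1} t). -/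
/- Setting: `n = m + 1 ≥ 2` classes (indices `0, …, m` of `Fin (m+2)` via `castSucc`), the
abstention label is `Fin.last (m+1)`, and `c ∈ (0,1)` is the abstention cost. -/

/-- Maximum of the class scores. -/
noncomputable def classMax (m : ℕ) (v : Fin (m + 2) → ℝ) : ℝ :=
  Finset.univ.sup' Finset.univ_nonempty (fun i : Fin (m + 1) => v i.castSucc)

/-- The prediction `𝗁(v)` of a score vector: the abstention label `Fin.last (m+1)` if its score
is at least the maximal class score, and otherwise the smallest class index achieving the
maximal class score (deterministic tie-breaking). -/
noncomputable def pred (m : ℕ) (v : Fin (m + 2) → ℝ) : Fin (m + 2) :=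
  if classMax m v ≤ v (Fin.last (m + 1)) then Fin.last (m + 1)
  else Fin.castSucc <|
    (Finset.univ.filter fun i : Fin (m + 1) => v i.castSucc = classMax m v).min'
      (by
        obtain ⟨b, -, hb⟩ :=
          Finset.exists_mem_eq_sup' (Finset.univ_nonempty (α := Fin (m + 1)))
            (fun i : Fin (m + 1) => v i.castSucc)
        exact ⟨b, Finset.mem_filter.mpr ⟨Finset.mem_univ b, hb.symm⟩⟩)

/-- Extension of a conditional probability vector by `p (n+1) := 1 - c`. -/
noncomputable def pext (m : ℕ) (c : ℝ) (p : Fin (m + 1) → ℝ) : Fin (m + 2) → ℝ :=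
  Fin.snoc p (1 - c)

/-- Conditional abstention risk `C_abs(v, p) = 1 - p(𝗁(v))`. -/
noncomputable def condAbsRisk (m : ℕ) (c : ℝ) (p : Fin (m + 1) → ℝ)
    (v : Fin (m + 2) → ℝ) : ℝ :=
  1 - pext m c p (pred m v)

/-- The cross-entropy family of losses `ℓ_μ` (logistic loss at `μ = 1`, generalized
cross-entropy for `μ ∈ (1,2)`, mean absolute error at `μ = 2`). -/
noncomputable def ellmu (m : ℕ) (μ : ℝ) (v : Fin (m + 2) → ℝ) (y : Fin (m + 2)) : ℝ :=
  if μ = 1 then Real.log (∑ y', Real.exp (v y' - v y))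
  else (1 / (1 - μ)) * ((∑ y', Real.exp (v y' - v y)) ^ (1 - μ) - 1)

/-- Conditional risk of the cross-entropy score-based surrogate
`C_μ(v, p) = Σ_{y=1}^{n+1} p(y) ℓ_μ(v, y)`, with `p(n+1) = 1 - c`. -/
noncomputable def condSurRisk (m : ℕ) (μ c : ℝ) (p : Fin (m + 1) → ℝ)
    (v : Fin (m + 2) → ℝ) : ℝ :=
  ∑ y, pext m c p y * ellmu m μ v y

section helpers
open Real Set


noncomputable def phi (μ s : ℝ) : ℝ :=
  if μ = 1 then -Real.log s else (1 - s ^ (μ-1)) / (μ-1)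

/-- midpoint AM-GM: `(2x)^t ≤ 2tx + (1-t)` for `x ≥ 0`, `t ∈ [0,1]`. -/
lemma amgm_two (x t : ℝ) (hx : 0 ≤ x) (ht : 0 ≤ t) (ht1 : t ≤ 1) :
    (2*x) ^ t ≤ 2*t*x + (1 - t) := by
  have h := Real.geom_mean_le_arith_mean2_weighted ht (by linarith : (0:ℝ) ≤ 1 - t)
    (by linarith : (0:ℝ) ≤ 2*x) (by norm_num : (0:ℝ) ≤ 1) (by ring)
  simpa [Real.one_rpow] using h.trans_eq (by ring)

/-- `2^t ≤ 1 + t` for `t ∈ [0,1]`. -/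
lemma two_rpow_le (t : ℝ) (ht : 0 ≤ t) (ht1 : t ≤ 1) : (2:ℝ) ^ t ≤ 1 + t := by
  have := amgm_two 1 t (by norm_num) ht ht1
  norm_num at this
  linarith

/-- two-point power mean: `a^t + b^t ≤ 2^(1-t) (a+b)^t`. -/
lemma pow_mean_pair (a b t : ℝ) (ha : 0 ≤ a) (hb : 0 ≤ b) (hab : 0 < a + b)
    (ht : 0 ≤ t) (ht1 : t ≤ 1) :
    a ^ t + b ^ t ≤ 2 ^ (1-t) * (a+b) ^ t := by
  have hs := hab
  have h1 : (2*(a/(a+b))) ^ t ≤ 2*t*(a/(a+b)) + (1 - t) :=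
    amgm_two _ t (by positivity) ht ht1
  have h2 : (2*(b/(a+b))) ^ t ≤ 2*t*(b/(a+b)) + (1 - t) :=
    amgm_two _ t (by positivity) ht ht1
  have e1 : (2*(a/(a+b))) ^ t = 2 ^ t * (a ^ t / (a+b) ^ t) := by
    rw [Real.mul_rpow (by norm_num) (by positivity), Real.div_rpow ha hs.le]
  have e2 : (2*(b/(a+b))) ^ t = 2 ^ t * (b ^ t / (a+b) ^ t) := by
    rw [Real.mul_rpow (by norm_num) (by positivity), Real.div_rpow hb hs.le]
  rw [e1] at h1; rw [e2] at h2
  have hsum : 2 ^ t * (a ^ t / (a+b) ^ t) + 2 ^ t * (b ^ t / (a+b) ^ t) ≤ 2 := by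
    have : 2*t*(a/(a+b)) + (1 - t) + (2*t*(b/(a+b)) + (1 - t)) = 2 := by
      field_simp; ring
    linarith
  have hpow : (0:ℝ) < (a+b) ^ t := Real.rpow_pos_of_pos hs _
  have h2t : (0:ℝ) < 2 ^ t := Real.rpow_pos_of_pos (by norm_num) _
  have key : 2 ^ t * (a ^ t + b ^ t) ≤ 2 * (a+b) ^ t := by
    have := mul_le_mul_of_nonneg_right hsum hpow.le
    calc 2 ^ t * (a ^ t + b ^ t)
        = (2 ^ t * (a ^ t / (a+b) ^ t) + 2 ^ t * (b ^ t / (a+b) ^ t)) * (a+b)^t := by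
          field_simp
      _ ≤ 2 * (a+b) ^ t := this
  have e3 : (2:ℝ) ^ (1-t) = 2 / 2 ^ t := by
    rw [Real.rpow_sub (by norm_num), Real.rpow_one]
  rw [e3, div_mul_eq_mul_div, le_div_iff₀ h2t]
  linarith [key]

lemma pair_ge_two (x γ : ℝ) (hx : 0 ≤ x) (hx1 : x < 1) (hγ : γ ≤ 0) :
    2 ≤ (1+x) ^ γ + (1-x) ^ γ := by
  have h1 : (0:ℝ) < 1 + x := by linarith
  have h2 : (0:ℝ) < 1 - x := by linarith
  have hA : (0:ℝ) < (1+x) ^ γ := Real.rpow_pos_of_pos h1 _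
  have hAB : 1 ≤ (1+x) ^ γ * (1-x) ^ γ := by
    rw [← Real.mul_rpow h1.le h2.le]
    exact Real.one_le_rpow_of_pos_of_le_one_of_nonpos (by nlinarith) (by nlinarith) hγ
  nlinarith [sq_nonneg ((1+x) ^ γ - 1)]

lemma hasDerivAt_plus (κ t : ℝ) (h : (0:ℝ) < 1 + t) :
    HasDerivAt (fun x : ℝ => (1+x) ^ κ) (κ * (1+t) ^ (κ-1)) t := by
  have h1 : HasDerivAt (fun x : ℝ => 1 + x) 1 t := by
    simpa using (hasDerivAt_id t).const_add 1
  simpa [Function.comp_def] using (Real.hasDerivAt_rpow_const (p := κ) (Or.inl h.ne')).comp t h1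

lemma hasDerivAt_minus (κ t : ℝ) (h : (0:ℝ) < 1 - t) :
    HasDerivAt (fun x : ℝ => (1-x) ^ κ) (-(κ * (1-t) ^ (κ-1))) t := by
  have h1 : HasDerivAt (fun x : ℝ => 1 - x) (-1) t := by
    simpa using (hasDerivAt_id t).const_sub 1
  have := (Real.hasDerivAt_rpow_const (p := κ) (Or.inl h.ne')).comp t h1
  simpa [mul_comm, Function.comp_def] using this

/-- `(1+x)^κ - (1-x)^κ ≥ 2κx` for `κ ∈ (0,1]`, `x ∈ [0,1)`. -/
lemma xi_nonneg (κ x : ℝ) (hκ : 0 < κ) (hκ1 : κ ≤ 1) (hx : 0 ≤ x) (hx1 : x < 1) :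
    2*κ*x ≤ (1+x) ^ κ - (1-x) ^ κ := by
  set f : ℝ → ℝ := fun t => (1+t) ^ κ - (1-t) ^ κ - 2*κ*t with hf
  have hderiv : ∀ t ∈ Icc (0:ℝ) x, HasDerivAt f ((κ * (1+t) ^ (κ-1) + κ * (1-t) ^ (κ-1)) - 2*κ) t := by
    intro t ht
    have h1 : (0:ℝ) < 1 + t := by have := ht.1; linarith
    have h2 : (0:ℝ) < 1 - t := by have := ht.2; linarith
    have := ((hasDerivAt_plus κ t h1).sub (hasDerivAt_minus κ t h2)).sub
      ((hasDerivAt_id t).const_mul (2*κ))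
    simpa [hf, sub_neg_eq_add, Pi.sub_def] using this
  have hmono : MonotoneOn f (Icc 0 x) := by
    apply monotoneOn_of_deriv_nonneg (convex_Icc 0 x)
    · exact fun t ht => (hderiv t ht).continuousAt.continuousWithinAt
    · intro t ht
      rw [interior_Icc] at ht
      exact (hderiv t (Ioo_subset_Icc_self ht)).differentiableAt.differentiableWithinAt
    · intro t ht
      rw [interior_Icc] at ht
      rw [(hderiv t (Ioo_subset_Icc_self ht)).deriv]
      have hp := pair_ge_two t (κ-1) ht.1.le (lt_trans ht.2 hx1) (by linarith)
      nlinarith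
  have h0 : f 0 = 0 := by simp [hf]
  have := hmono (left_mem_Icc.2 hx) (right_mem_Icc.2 hx) hx
  rw [h0] at this
  simp only [hf] at this
  linarith

/-- key scalar inequality: `(1+d)^μ + (1-d)^μ ≥ 2 + μ(μ-1)d²` for `μ ∈ (1,2)`, `d ∈ [0,1)`. -/
lemma key_mu (μ d : ℝ) (hμ : 1 < μ) (hμ2 : μ < 2) (hd : 0 ≤ d) (hd1 : d < 1) :
    2 + μ*(μ-1)*d^2 ≤ (1+d) ^ μ + (1-d) ^ μ := by
  set F : ℝ → ℝ := fun t => (1+t) ^ μ + (1-t) ^ μ - 2 - μ*(μ-1)*t^2 with hF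
  have hderiv : ∀ t ∈ Icc (0:ℝ) d, HasDerivAt F
      ((μ * (1+t) ^ (μ-1) - μ * (1-t) ^ (μ-1)) - μ*(μ-1)*(2*t)) t := by
    intro t ht
    have h1 : (0:ℝ) < 1 + t := by have := ht.1; linarith
    have h2 : (0:ℝ) < 1 - t := by have := ht.2; linarith
    have hsq : HasDerivAt (fun t : ℝ => t^2) (2*t) t := by
      simpa using hasDerivAt_pow 2 t
    have := (((hasDerivAt_plus μ t h1).add (hasDerivAt_minus μ t h2)).sub
      (hasDerivAt_const t 2)).sub (hsq.const_mul (μ*(μ-1)))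
    simpa [hF, sub_neg_eq_add, mul_comm, mul_assoc, mul_left_comm, Pi.add_def, Pi.sub_def, ← sub_eq_add_neg] using this
  have hmono : MonotoneOn F (Icc 0 d) := by
    apply monotoneOn_of_deriv_nonneg (convex_Icc 0 d)
    · exact fun t ht => (hderiv t ht).continuousAt.continuousWithinAt
    · intro t ht
      rw [interior_Icc] at ht
      exact (hderiv t (Ioo_subset_Icc_self ht)).differentiableAt.differentiableWithinAt
    · intro t ht
      rw [interior_Icc] at ht
      rw [(hderiv t (Ioo_subset_Icc_self ht)).deriv]
      have hxi := xi_nonneg (μ-1) t (by linarith) (by linarith) ht.1.le (lt_trans ht.2 hd1)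
      nlinarith
  have h0 : F 0 = 0 := by norm_num [hF]
  have := hmono (left_mem_Icc.2 hd) (right_mem_Icc.2 hd) hd
  rw [h0] at this
  simp only [hF] at this
  linarith

/-- binary Pinsker, one branch. -/
lemma pinsker_branch (p t : ℝ) (ht : 0 < t) (htp : t ≤ p) (hp : p < 1) :
    2*(p-t)^2 ≤ p * Real.log (p/t) + (1-p) * Real.log ((1-p)/(1-t)) := by
  set G : ℝ → ℝ := fun q => p * Real.log (p/q) + (1-p) * Real.log ((1-p)/(1-q)) - 2*(p-q)^2
    with hG
  have hp0 : 0 < p := lt_of_lt_of_le ht htp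
  have hderiv : ∀ q ∈ Icc t p, HasDerivAt G (p * -(1/q) + (1-p) * (1/(1-q)) - -(4*(p-q))) q := by
    intro q hq
    have hq0 : 0 < q := lt_of_lt_of_le ht hq.1
    have hq1 : 0 < 1 - q := by have := lt_of_le_of_lt hq.2 hp; linarith
    have h1 : HasDerivAt (fun q : ℝ => Real.log (p/q)) (-(1/q)) q := by
      have : HasDerivAt (fun q : ℝ => Real.log p - Real.log q) (-(1/q)) q := by
        simpa using ((Real.hasDerivAt_log hq0.ne').const_sub (Real.log p))
      refine this.congr_of_eventuallyEq ?_
      filter_upwards [eventually_gt_nhds hq0] with x hx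
      rw [Real.log_div hp0.ne' hx.ne']
    have h2 : HasDerivAt (fun q : ℝ => Real.log ((1-p)/(1-q))) (1/(1-q)) q := by
      have hl : HasDerivAt (fun q : ℝ => Real.log (1-q)) (-(1/(1-q))) q := by
        have hin : HasDerivAt (fun q : ℝ => 1 - q) (-1) q := by
          simpa using (hasDerivAt_id q).const_sub 1
        have := (Real.hasDerivAt_log hq1.ne').comp q hin
        simpa [div_eq_mul_inv, mul_comm, Function.comp_def] using this
      have : HasDerivAt (fun q : ℝ => Real.log (1-p) - Real.log (1-q)) (1/(1-q)) q := by
        simpa using hl.const_sub (Real.log (1-p))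
      refine this.congr_of_eventuallyEq ?_
      filter_upwards [eventually_lt_nhds (show q < 1 by linarith)] with x hx
      rw [Real.log_div (by linarith : (1:ℝ)-p ≠ 0) (ne_of_gt (by linarith : (0:ℝ) < 1-x))]
    have hsq : HasDerivAt (fun q : ℝ => 2*(p-q)^2) (-(4*(p-q))) q := by
      have hin : HasDerivAt (fun q : ℝ => p - q) (-1) q := by
        simpa using (hasDerivAt_id q).const_sub p
      have h3 := (hin.pow 2).const_mul (2:ℝ)
      exact h3.congr_deriv (by push_cast; ring)
    exact ((h1.const_mul p).add (h2.const_mul (1-p))).sub hsq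
  have hanti : AntitoneOn G (Icc t p) := by
    apply antitoneOn_of_deriv_nonpos (convex_Icc t p)
    · exact fun q hq => (hderiv q hq).continuousAt.continuousWithinAt
    · intro q hq
      rw [interior_Icc] at hq
      exact (hderiv q (Ioo_subset_Icc_self hq)).differentiableAt.differentiableWithinAt
    · intro q hq
      rw [interior_Icc] at hq
      rw [(hderiv q (Ioo_subset_Icc_self hq)).deriv]
      have hq0 : 0 < q := lt_trans ht hq.1
      have hq1 : 0 < 1 - q := by have := lt_of_lt_of_le hq.2 hp.le; linarith
      have hqp : q ≤ p := hq.2.le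
      have key : (p/q) - (1-p)/(1-q) - 4*(p-q) = (p-q)*(1-2*q)^2/(q*(1-q)) := by
        field_simp
        ring
      have hpos : 0 ≤ (p-q)*(1-2*q)^2/(q*(1-q)) :=
        div_nonneg (mul_nonneg (by linarith) (sq_nonneg _)) (by positivity)
      rw [← key] at hpos
      have e1 : p * -(1/q) = -(p/q) := by field_simp
      have e2 : (1-p) * (1/(1-q)) = (1-p)/(1-q) := by field_simp
      rw [e1, e2]
      linarith
  have hGp : G p = 0 := by
    simp [hG, div_self hp0.ne', div_self (by linarith : (1:ℝ)-p ≠ 0)]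
  have := hanti (left_mem_Icc.2 htp) (right_mem_Icc.2 htp) htp
  rw [hGp] at this
  simp only [hG] at this
  linarith


lemma final_arith (t σ Nt W η Δ : ℝ) (ht0 : 0 < t) (hσ0 : 0 < σ) (hNt : 0 < Nt)
    (h : t*Δ^2/(2*σ) * (1/Nt) - η ≤ W * t) :
    Δ^2 ≤ 2*σ*Nt*(W + η*(1/t)) := by
  have expand : t * (2*σ*Nt*(W + η*(1/t))) = 2*σ*Nt*(W*t) + 2*σ*Nt*η := by
    field_simp
  have h3 := mul_le_mul_of_nonneg_left h (by positivity : (0:ℝ) ≤ 2*σ*Nt)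
  have h4 : 2*σ*Nt*(t*Δ^2/(2*σ) * (1/Nt)) = t*Δ^2 := by
    field_simp
  have hgoal : t * Δ^2 ≤ t * (2*σ*Nt*(W + η*(1/t))) := by
    rw [expand]; nlinarith [h3, h4]
  exact (mul_le_mul_iff_right₀ ht0).mp (by linarith [hgoal])

set_option maxHeartbeats 1000000 in
/-- Core scalar bound, case `μ > 1`. -/
lemma core_gt (μ N α β a b η β' σ s₀ a' b' : ℝ)
    (hμ1 : 1 < μ) (hμ2 : μ < 2) (hN : 2 ≤ N)
    (hβ : 0 ≤ β) (hη : 0 < η) (hβα : β + η ≤ α) (hα1 : α ≤ 1)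
    (hb : 0 < b) (hba : b ≤ a) (hs1 : a + b ≤ 1) (haN : 1/N ≤ a)
    (hβ' : β' = β + η) (hσ : σ = α + β') (hs₀ : s₀ = a + b)
    (ha' : a' = s₀*β'/σ) (hb' : b' = s₀*α/σ) :
    (α - β')^2 ≤ 2*σ * N^(μ-1) *
      ((β*(phi μ a - phi μ a') + α*(phi μ b - phi μ b')) + η * (1/(μ-1))) := by
  obtain ⟨t, htdef⟩ : ∃ t, t = μ - 1 := ⟨_, rfl⟩
  rw [← htdef]
  have ht0 : 0 < t := by rw [htdef]; linarith
  have ht1 : t < 1 := by rw [htdef]; linarith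
  have hβ'0 : 0 < β' := by rw [hβ']; linarith
  have hα0 : 0 < α := by linarith [hβα]
  have hσ0 : 0 < σ := by rw [hσ]; linarith
  have ha0 : 0 < a := lt_of_lt_of_le hb hba
  have hs0 : 0 < s₀ := by rw [hs₀]; linarith
  have hs₀1 : s₀ ≤ 1 := by rw [hs₀]; linarith
  have ha'0 : 0 < a' := by rw [ha']; positivity
  have hb'0 : 0 < b' := by rw [hb']; positivity
  have hμne : μ ≠ 1 := by linarith
  have hphi : ∀ x : ℝ, phi μ x = (1 - x ^ t)/t := fun x => by rw [phi, if_neg hμne, htdef]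
  have hNpos : (0:ℝ) < N := by linarith
  have hβ'α : β' ≤ α := by rw [hβ']; linarith
  -- W * t
  have hWt : (β*(phi μ a - phi μ a') + α*(phi μ b - phi μ b')) * t
      = (β * a'^t + α * b'^t) - (β * a^t + α * b^t) := by
    rw [hphi, hphi, hphi, hphi]
    field_simp
    ring
  -- (i)
  have ha'le1 : a' ≤ 1 := by
    rw [ha', div_le_one hσ0, hσ]
    nlinarith
  have hi : β' * a'^t - η ≤ β * a'^t := by
    have h1 : a'^t ≤ 1 := Real.rpow_le_one ha'0.le ha'le1 ht0.le
    have h2 : η * a'^t ≤ η := by nlinarith [Real.rpow_pos_of_pos ha'0 t]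
    have : β * a'^t = β' * a'^t - η * a'^t := by rw [hβ']; ring
    linarith [this]
  -- (ii)
  have ha't : a'^t = s₀^t * β'^t / σ^t := by
    rw [ha', Real.div_rpow (by positivity) hσ0.le, Real.mul_rpow hs0.le hβ'0.le]
  have hb't : b'^t = s₀^t * α^t / σ^t := by
    rw [hb', Real.div_rpow (by positivity) hσ0.le, Real.mul_rpow hs0.le hα0.le]
  have hββ : β' * β'^t = β'^μ := by
    rw [← Real.rpow_one_add' hβ'0.le (by rw [htdef]; intro h; linarith)]
    norm_num [htdef]
  have hαα : α * α^t = α^μ := by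
    rw [← Real.rpow_one_add' hα0.le (by rw [htdef]; intro h; linarith)]
    norm_num [htdef]
  have hσt0 : (0:ℝ) < σ^t := Real.rpow_pos_of_pos hσ0 _
  have hii : β' * a'^t + α * b'^t = s₀^t * (σ^(-t) * (β'^μ + α^μ)) := by
    rw [ha't, hb't, Real.rpow_neg hσ0.le]
    rw [← hββ, ← hαα]
    field_simp
  -- (iii)
  have hiii : β * a^t + α * b^t ≤ 2^(-t) * σ * s₀^t := by
    have hpm : a^t + b^t ≤ 2^(1-t) * s₀^t := by
      rw [hs₀]; exact pow_mean_pair a b t ha0.le hb.le (by linarith) ht0.le ht1.le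
    have hmono : b^t ≤ a^t := Real.rpow_le_rpow hb.le hba ht0.le
    have e5 : (2:ℝ)^(1-t) = 2 * 2^(-t) := by
      rw [show (1:ℝ) - t = 1 + -t by ring, Real.rpow_add (by norm_num), Real.rpow_one]
    have h2t : (0:ℝ) < 2^(-t) := Real.rpow_pos_of_pos (by norm_num) _
    have hst : (0:ℝ) < s₀^t := Real.rpow_pos_of_pos hs0 _
    have hαβσ : α + β ≤ σ := by rw [hσ, hβ']; linarith
    have hA : (α+β)/2 * (a^t+b^t) ≤ (α+β)/2 * (2^(1-t) * s₀^t) :=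
      mul_le_mul_of_nonneg_left hpm (by positivity)
    have hB : (0:ℝ) ≤ (α-β)*(a^t-b^t) := mul_nonneg (by linarith) (by linarith)
    have hid : β * a^t + α * b^t = (α+β)/2*(a^t+b^t) - (α-β)*(a^t-b^t)/2 := by ring
    have e6 : (α+β)/2 * (2^(1-t)*s₀^t) = (α+β)*(2^(-t)*s₀^t) := by rw [e5]; ring
    have hC : (α+β)*(2^(-t)*s₀^t) ≤ σ*(2^(-t)*s₀^t) :=
      mul_le_mul_of_nonneg_right hαβσ (by positivity)
    have e7 : σ*(2^(-t)*s₀^t) = 2^(-t) * σ * s₀^t := by ring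
    linarith
  -- (iv) identity
  obtain ⟨d, hddef⟩ : ∃ d, d = (α - β')/σ := ⟨_, rfl⟩
  have hd0 : 0 ≤ d := by rw [hddef]; exact div_nonneg (by linarith) hσ0.le
  have hd1 : d < 1 := by
    rw [hddef, div_lt_one hσ0, hσ]; linarith
  have h1pd : 1 + d = 2*α/σ := by
    rw [hddef, hσ]; field_simp; ring
  have h1md : 1 - d = 2*β'/σ := by
    rw [hddef, hσ]; field_simp; ring
  have h2μ0 : (0:ℝ) < 2^μ := Real.rpow_pos_of_pos (by norm_num) _
  have hAα : σ*2^(-μ)*(1+d)^μ = σ^(-t)*α^μ := by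
    rw [h1pd, Real.div_rpow (by positivity) hσ0.le, Real.mul_rpow (by norm_num) hα0.le,
        Real.rpow_neg (by norm_num : (0:ℝ) ≤ 2), Real.rpow_neg hσ0.le]
    have hσμ : σ^μ = σ * σ^t := by
      rw [← Real.rpow_one_add' hσ0.le (by rw [htdef]; intro h; linarith)]
      norm_num [htdef]
    rw [hσμ]
    field_simp
  have hAβ : σ*2^(-μ)*(1-d)^μ = σ^(-t)*β'^μ := by
    rw [h1md, Real.div_rpow (by positivity) hσ0.le, Real.mul_rpow (by norm_num) hβ'0.le,
        Real.rpow_neg (by norm_num : (0:ℝ) ≤ 2), Real.rpow_neg hσ0.le]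
    have hσμ : σ^μ = σ * σ^t := by
      rw [← Real.rpow_one_add' hσ0.le (by rw [htdef]; intro h; linarith)]
      norm_num [htdef]
    rw [hσμ]
    field_simp
  have hA2 : σ*2^(-μ)*2 = 2^(-t)*σ := by
    have h22 : (2:ℝ)^(-t) = 2 * 2^(-μ) := by
      rw [show -t = 1 + -μ by rw [htdef]; ring]
      rw [Real.rpow_one_add' (by norm_num) (by intro h; exact absurd h (by intro h'; linarith [hμ1]))]
    rw [h22]; ring
  -- (v),(vi)
  have hkey := key_mu μ d hμ1 hμ2 hd0 hd1
  have h2t : (2:ℝ)^t ≤ μ := by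
    have := two_rpow_le t ht0.le ht1.le
    rw [htdef] at this ⊢; linarith
  have hk2 : μ*t*d^2 ≤ (1+d)^μ + (1-d)^μ - 2 := by
    rw [htdef]; linarith [hkey]
  have h2mμ : (0:ℝ) < 2^(-μ) := Real.rpow_pos_of_pos (by norm_num) _
  have h2mt : (2:ℝ)^(-μ) * 2^t = 1/2 := by
    rw [← Real.rpow_add (by norm_num : (0:ℝ) < 2)]
    rw [show -μ + t = -1 by rw [htdef]; ring, Real.rpow_neg_one]
    norm_num
  have hd2 : d^2 = (α-β')^2/σ^2 := by rw [hddef, div_pow]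
  have hmain : t*(α-β')^2/(2*σ) ≤ σ^(-t) * (β'^μ + α^μ) - 2^(-t)*σ := by
    have hc1 : σ*2^(-μ)*((1+d)^μ + (1-d)^μ - 2) = σ^(-t) * (β'^μ + α^μ) - 2^(-t)*σ := by
      linear_combination hAα + hAβ - hA2
    have hc2 : σ*2^(-μ)*(μ*(t*d^2)) ≤ σ*2^(-μ)*((1+d)^μ + (1-d)^μ - 2) := by
      apply mul_le_mul_of_nonneg_left _ (by positivity : (0:ℝ) ≤ σ*2^(-μ))
      calc μ*(t*d^2) = μ*t*d^2 := by ring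
        _ ≤ _ := hk2
    have hge : σ*2^(-μ)*(2^t*(t*d^2)) ≤ σ*2^(-μ)*(μ*(t*d^2)) :=
      mul_le_mul_of_nonneg_left
        (mul_le_mul_of_nonneg_right h2t (by positivity : (0:ℝ) ≤ t*d^2))
        (by positivity : (0:ℝ) ≤ σ*2^(-μ))
    have heq : σ*2^(-μ)*(2^t*(t*d^2)) = t*(α-β')^2/(2*σ) := by
      rw [hd2]
      rw [show σ*2^(-μ)*(2^t*(t*((α-β')^2/σ^2))) = (2^(-μ)*2^t) * (t*(α-β')^2/σ) by
        field_simp]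
      rw [h2mt]
      field_simp
    linarith
  -- (vii) combine
  have hWlow : t*(α-β')^2/(2*σ) * s₀^t - η
      ≤ (β*(phi μ a - phi μ a') + α*(phi μ b - phi μ b')) * t := by
    rw [hWt]
    have hst : (0:ℝ) < s₀^t := Real.rpow_pos_of_pos hs0 _
    have h1 : (σ^(-t) * (β'^μ + α^μ) - 2^(-t)*σ) * s₀^t
        = s₀^t * (σ^(-t) * (β'^μ + α^μ)) - 2^(-t)*σ*s₀^t := by ring
    have h2 := mul_le_mul_of_nonneg_right hmain hst.le
    rw [h1] at h2
    rw [← hii] at h2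
    linarith [hi, hiii]
  -- conclude
  have hNt : (0:ℝ) < N^t := Real.rpow_pos_of_pos hNpos _
  have hst : (0:ℝ) < s₀^t := Real.rpow_pos_of_pos hs0 _
  have hsN : 1/N^t ≤ s₀^t := by
    calc 1/N^t = (1/N)^t := by rw [Real.div_rpow (by norm_num) hNpos.le, Real.one_rpow]
      _ ≤ s₀^t := Real.rpow_le_rpow (by positivity) (by rw [hs₀]; exact haN.trans (by linarith)) ht0.le
  have hW1 : t*(α-β')^2/(2*σ) * (1/N^t) - η
      ≤ (β*(phi μ a - phi μ a') + α*(phi μ b - phi μ b')) * t := by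
    have h5 : t*(α-β')^2/(2*σ) * (1/N^t) ≤ t*(α-β')^2/(2*σ) * s₀^t :=
      mul_le_mul_of_nonneg_left hsN (by positivity)
    linarith [hWlow]
  exact final_arith t σ (N^t) _ η (α-β') ht0 hσ0 hNt hW1

set_option maxHeartbeats 1000000 in
/-- Core scalar bound, case `μ = 1`. -/
lemma core_eq (N α β a b η β' σ s₀ a' b' : ℝ)
    (hN : 2 ≤ N)
    (hβ : 0 ≤ β) (hη : 0 < η) (hβα : β + η ≤ α) (hα1 : α ≤ 1)
    (hb : 0 < b) (hba : b ≤ a) (hs1 : a + b ≤ 1) (haN : 1/N ≤ a)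
    (hβ' : β' = β + η) (hσ : σ = α + β') (hs₀ : s₀ = a + b)
    (ha' : a' = s₀*β'/σ) (hb' : b' = s₀*α/σ) :
    (α - β')^2 ≤ 2*σ *
      ((β*(phi 1 a - phi 1 a') + α*(phi 1 b - phi 1 b')) + η * Real.log N) := by
  have hβ'0 : 0 < β' := by rw [hβ']; linarith
  have hα0 : 0 < α := by linarith [hβα]
  have hσ0 : 0 < σ := by rw [hσ]; linarith
  have ha0 : 0 < a := lt_of_lt_of_le hb hba
  have hs0 : 0 < s₀ := by rw [hs₀]; linarith
  have hs₀1 : s₀ ≤ 1 := by rw [hs₀]; linarith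
  have ha'0 : 0 < a' := by rw [ha']; positivity
  have hb'0 : 0 < b' := by rw [hb']; positivity
  have hβ'α : β' ≤ α := by rw [hβ']; linarith
  have hNpos : (0:ℝ) < N := by linarith
  have hphi : ∀ x : ℝ, phi 1 x = -Real.log x := fun x => by rw [phi, if_pos rfl]
  -- Step 1
  have ha'1 : a' ≤ 1 := by
    rw [ha', div_le_one hσ0, hσ]
    nlinarith
  have hstep1 : β'*(Real.log a' - Real.log a) - η * Real.log N
      ≤ β*(Real.log a' - Real.log a) := by
    have h1 : Real.log a' ≤ 0 := Real.log_nonpos ha'0.le ha'1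
    have h2 : -Real.log N ≤ Real.log a := by
      rw [← Real.log_inv]
      exact Real.log_le_log (by positivity) (by rw [inv_eq_one_div]; exact haN)
    have hβeq : β = β' - η := by rw [hβ']; ring
    have h3 : Real.log a' - Real.log a ≤ Real.log N := by linarith
    have h4 := mul_le_mul_of_nonneg_left h3 hη.le
    have h5 : β*(Real.log a' - Real.log a)
        = β'*(Real.log a' - Real.log a) - η*(Real.log a' - Real.log a) := by
      rw [hβeq]; ring
    linarith [h4, h5]
  -- Step 2 : Pinsker
  have hbs : b/s₀ ≤ 1/2 := by
    rw [div_le_iff₀ hs0, hs₀]; linarith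
  have hασ : 1/2 ≤ α/σ := by
    rw [le_div_iff₀ hσ0, hσ]; linarith
  have hpin := pinsker_branch (α/σ) (b/s₀) (by positivity) (hbs.trans hασ)
    (by rw [div_lt_one hσ0, hσ]; linarith)
  have e1 : (α/σ)/(b/s₀) = b'/b := by
    rw [hb']; field_simp
  have e2 : 1 - α/σ = β'/σ := by
    rw [hσ]; field_simp; ring
  have e3 : 1 - b/s₀ = a/s₀ := by
    rw [hs₀]; field_simp; ring
  have e4 : (β'/σ)/(a/s₀) = a'/a := by
    rw [ha']; field_simp
  rw [e1, e2, e3, e4] at hpin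
  rw [Real.log_div hb'0.ne' hb.ne', Real.log_div ha'0.ne' ha0.ne'] at hpin
  -- multiply by σ and lower bound the quadratic
  have hq : (α-β')/(2*σ) ≤ α/σ - b/s₀ := by
    have : α/σ - 1/2 = (α-β')/(2*σ) := by rw [hσ]; field_simp; ring
    linarith
  have hq0 : 0 ≤ (α-β')/(2*σ) := div_nonneg (by linarith) (by linarith)
  have hq2 : ((α-β')/(2*σ))^2 ≤ (α/σ - b/s₀)^2 := by
    apply pow_le_pow_left₀ hq0 hq
  have hbr : (α-β')^2/(2*σ) ≤ β'*(Real.log a' - Real.log a) + α*(Real.log b' - Real.log b) := by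
    have hqq : 2*((α-β')/(2*σ))^2 ≤ 2*(α/σ - b/s₀)^2 := by nlinarith [hq2]
    have h5 := mul_le_mul_of_nonneg_left (hqq.trans hpin) hσ0.le
    have e5 : σ * (α/σ * (Real.log b' - Real.log b) + β'/σ * (Real.log a' - Real.log a))
        = β'*(Real.log a' - Real.log a) + α*(Real.log b' - Real.log b) := by
      field_simp; ring
    have e6 : σ * (2*((α-β')/(2*σ))^2) = (α-β')^2/(2*σ) := by
      field_simp
    calc (α-β')^2/(2*σ) = σ * (2*((α-β')/(2*σ))^2) := e6.symm
      _ ≤ σ * (α/σ * (Real.log b' - Real.log b) + β'/σ * (Real.log a' - Real.log a)) := h5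
      _ = _ := e5
  -- conclude
  have hW : (α-β')^2/(2*σ) - η * Real.log N
      ≤ β*(phi 1 a - phi 1 a') + α*(phi 1 b - phi 1 b') := by
    rw [hphi, hphi, hphi, hphi]
    have : β*(-Real.log a - -Real.log a') + α*(-Real.log b - -Real.log b')
        = β*(Real.log a' - Real.log a) + α*(Real.log b' - Real.log b) := by ring
    rw [this]
    linarith [hstep1, hbr]
  have := mul_le_mul_of_nonneg_left hW (by positivity : (0:ℝ) ≤ 2*σ)
  have e7 : 2*σ*((α-β')^2/(2*σ) - η * Real.log N)
      = (α-β')^2 - 2*σ*(η*Real.log N) := by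
    field_simp
  rw [e7] at this
  have e8 : 2*σ*((β*(phi 1 a - phi 1 a') + α*(phi 1 b - phi 1 b')) + η * Real.log N)
      = 2*σ*(β*(phi 1 a - phi 1 a') + α*(phi 1 b - phi 1 b')) + 2*σ*(η*Real.log N) := by
    ring
  rw [e8]
  linarith [this]

section facts
variable {m : ℕ} {c : ℝ} {p : Fin (m + 1) → ℝ}

lemma pext_nonneg (hp0 : ∀ y, 0 ≤ p y) (hc1 : c ≤ 1) (y : Fin (m+2)) :
    0 ≤ pext m c p y := by
  induction y using Fin.lastCases with
  | last => simp [pext]; linarith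
  | cast i => simpa [pext] using hp0 i

lemma pext_le_one (hp0 : ∀ y, 0 ≤ p y) (hp1 : ∑ y, p y = 1) (hc0 : 0 ≤ c)
    (y : Fin (m+2)) : pext m c p y ≤ 1 := by
  induction y using Fin.lastCases with
  | last => simp [pext]; linarith
  | cast i =>
    simp only [pext, Fin.snoc_castSucc]
    calc p i ≤ ∑ j, p j := Finset.single_le_sum (fun j _ => hp0 j) (Finset.mem_univ i)
      _ = 1 := hp1

lemma sum_pext (hp1 : ∑ y, p y = 1) : ∑ y, pext m c p y = 2 - c := by
  rw [Fin.sum_univ_castSucc]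
  simp only [pext, Fin.snoc_castSucc, Fin.snoc_last]
  rw [hp1]; ring

lemma le_classMax (m : ℕ) (v : Fin (m+2) → ℝ) (i : Fin (m+1)) :
    v i.castSucc ≤ classMax m v :=
  Finset.le_sup' (fun i : Fin (m+1) => v i.castSucc) (Finset.mem_univ i)

lemma v_le_pred (m : ℕ) (v : Fin (m+2) → ℝ) (y : Fin (m+2)) : v y ≤ v (pred m v) := by
  unfold pred
  split_ifs with h
  · induction y using Fin.lastCases with
    | last => exact le_refl _
    | cast i => exact le_trans (le_classMax m v i) h
  · have hmem := Finset.min'_mem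
      (Finset.univ.filter fun i : Fin (m + 1) => v i.castSucc = classMax m v)
      (by
        obtain ⟨b, -, hb⟩ :=
          Finset.exists_mem_eq_sup' (Finset.univ_nonempty (α := Fin (m + 1)))
            (fun i : Fin (m + 1) => v i.castSucc)
        exact ⟨b, Finset.mem_filter.mpr ⟨Finset.mem_univ b, hb.symm⟩⟩)
    have heq : v (Fin.castSucc _) = classMax m v := (Finset.mem_filter.mp hmem).2
    rw [heq]
    induction y using Fin.lastCases with
    | last => exact (lt_of_not_ge h).le
    | cast i => exact le_classMax m v i

lemma sum_diff_pair {N : ℕ} (f g : Fin N → ℝ) (i j : Fin N) (hij : i ≠ j)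
    (h : ∀ y, y ≠ i → y ≠ j → f y = g y) :
    ∑ y, f y - ∑ y, g y = (f i - g i) + (f j - g j) := by
  have e1 : ∑ y, f y - ∑ y, g y = ∑ y, (f y - g y) := by
    rw [Finset.sum_sub_distrib]
  rw [e1]
  have e2 : ∑ y, (f y - g y) = ∑ y ∈ ({i, j} : Finset (Fin N)), (f y - g y) := by
    symm
    apply Finset.sum_subset (Finset.subset_univ _)
    intro y _ hy
    simp only [Finset.mem_insert, Finset.mem_singleton] at hy
    push_neg at hy
    rw [h y hy.1 hy.2]; ring
  rw [e2, Finset.sum_pair hij]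

lemma ellmu_eq_phi (m : ℕ) (μ : ℝ) (x : Fin (m+2) → ℝ) (y : Fin (m+2)) :
    ellmu m μ x y = phi μ (Real.exp (x y) / ∑ y', Real.exp (x y')) := by
  have hT : (0:ℝ) < ∑ y', Real.exp (x y') :=
    Finset.sum_pos (fun _ _ => Real.exp_pos _) ⟨y, Finset.mem_univ y⟩
  have hE : (0:ℝ) < Real.exp (x y) := Real.exp_pos _
  have hsum : ∑ y', Real.exp (x y' - x y) = (∑ y', Real.exp (x y')) / Real.exp (x y) := by
    rw [Finset.sum_div]
    exact Finset.sum_congr rfl fun y' _ => by rw [Real.exp_sub]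
  unfold ellmu phi
  split_ifs with h
  · rw [hsum, Real.log_div hT.ne' hE.ne', Real.log_div hE.ne' hT.ne']
    ring
  · rw [hsum]
    have h1 : ((∑ y', Real.exp (x y')) / Real.exp (x y)) ^ (1-μ)
        = (Real.exp (x y) / ∑ y', Real.exp (x y')) ^ (μ-1) := by
      rw [show (∑ y', Real.exp (x y')) / Real.exp (x y)
          = (Real.exp (x y) / ∑ y', Real.exp (x y'))⁻¹ by rw [inv_div]]
      rw [Real.inv_rpow (by positivity), ← Real.rpow_neg (by positivity),
          show -(1-μ) = μ-1 by ring]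
    rw [h1]
    have hne : μ - 1 ≠ 0 := sub_ne_zero.mpr h
    have hne' : (1:ℝ) - μ ≠ 0 := fun hh => hne (by linarith)
    field_simp
    ring

end facts

lemma ellmu_nonneg (m : ℕ) (μ : ℝ) (hμ1 : 1 ≤ μ) (x : Fin (m+2) → ℝ) (y : Fin (m+2)) :
    0 ≤ ellmu m μ x y := by
  have hS : (1:ℝ) ≤ ∑ y', Real.exp (x y' - x y) := by
    calc (1:ℝ) = Real.exp (x y - x y) := by simp
      _ ≤ ∑ y', Real.exp (x y' - x y) :=
        Finset.single_le_sum (f := fun y' => Real.exp (x y' - x y))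
          (fun i _ => (Real.exp_pos _).le) (Finset.mem_univ y)
  unfold ellmu
  split_ifs with h
  · exact Real.log_nonneg hS
  · have hμ1' : 1 < μ := lt_of_le_of_ne hμ1 (Ne.symm h)
    have h1 : (∑ y', Real.exp (x y' - x y)) ^ (1-μ) ≤ 1 :=
      Real.rpow_le_one_of_one_le_of_nonpos hS (by linarith)
    have h2 : 1/(1-μ) < 0 := one_div_neg.2 (by linarith)
    nlinarith

lemma condSurRisk_nonneg (m : ℕ) (μ c : ℝ) (p : Fin (m+1) → ℝ)
    (hp0 : ∀ y, 0 ≤ p y) (hc1 : c ≤ 1) (hμ1 : 1 ≤ μ) (w : Fin (m+2) → ℝ) :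
    0 ≤ condSurRisk m μ c p w :=
  Finset.sum_nonneg fun y _ =>
    mul_nonneg (pext_nonneg hp0 hc1 y) (ellmu_nonneg m μ hμ1 w y)

set_option maxHeartbeats 1600000 in
lemma exists_comparator (m : ℕ) (μ c η : ℝ) (p : Fin (m+1) → ℝ) (v : Fin (m+2) → ℝ)
    (hμ1 : 1 ≤ μ) (hμ2 : μ < 2)
    (ystar yh : Fin (m+2)) (hyne : yh ≠ ystar) (hyh : yh = pred m v)
    (hβ0 : 0 ≤ pext m c p yh) (hα1 : pext m c p ystar ≤ 1)
    (hη0 : 0 < η) (hηα : pext m c p yh + η ≤ pext m c p ystar) :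
    ∃ w : Fin (m+2) → ℝ,
      (pext m c p ystar - (pext m c p yh + η))^2
        ≤ 2*(pext m c p ystar + (pext m c p yh + η)) * ((m+2:ℕ):ℝ)^(μ-1) *
          ((condSurRisk m μ c p v - condSurRisk m μ c p w)
            + η * (if μ = 1 then Real.log ((m+2:ℕ):ℝ) else 1/(μ-1))) := by
  obtain ⟨N, hNdef⟩ : ∃ N : ℝ, N = ((m+2:ℕ):ℝ) := ⟨_, rfl⟩
  have hN2 : 2 ≤ N := by rw [hNdef]; push_cast; linarith [Nat.cast_nonneg (α := ℝ) m]
  have hN0 : 0 < N := by linarith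
  obtain ⟨α, hαdef⟩ : ∃ x : ℝ, x = pext m c p ystar := ⟨_, rfl⟩
  obtain ⟨β, hβdef⟩ : ∃ x : ℝ, x = pext m c p yh := ⟨_, rfl⟩
  obtain ⟨T, hTdef⟩ : ∃ x : ℝ, x = ∑ y', Real.exp (v y') := ⟨_, rfl⟩
  have hT : 0 < T := hTdef ▸ Finset.sum_pos (fun _ _ => Real.exp_pos _) ⟨yh, Finset.mem_univ yh⟩
  obtain ⟨a, hadef⟩ : ∃ x : ℝ, x = Real.exp (v yh) / T := ⟨_, rfl⟩
  obtain ⟨b, hbdef⟩ : ∃ x : ℝ, x = Real.exp (v ystar) / T := ⟨_, rfl⟩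
  obtain ⟨β', hβ'⟩ : ∃ x : ℝ, x = β + η := ⟨_, rfl⟩
  obtain ⟨σ, hσ⟩ : ∃ x : ℝ, x = α + β' := ⟨_, rfl⟩
  obtain ⟨s₀, hs₀⟩ : ∃ x : ℝ, x = a + b := ⟨_, rfl⟩
  obtain ⟨a', ha'⟩ : ∃ x : ℝ, x = s₀*β'/σ := ⟨_, rfl⟩
  obtain ⟨b', hb'⟩ : ∃ x : ℝ, x = s₀*α/σ := ⟨_, rfl⟩
  have hβ0' : 0 ≤ β := hβdef ▸ hβ0
  have hηα' : β + η ≤ α := by rw [hβdef, hαdef]; exact hηα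
  have hα1' : α ≤ 1 := hαdef ▸ hα1
  have hβ'0 : 0 < β' := by rw [hβ']; linarith
  have hα0 : 0 < α := by linarith
  have hσ0 : 0 < σ := by rw [hσ]; linarith
  have ha0 : 0 < a := by rw [hadef]; positivity
  have hb0 : 0 < b := by rw [hbdef]; positivity
  have hs₀0 : 0 < s₀ := by rw [hs₀]; linarith
  have ha'0 : 0 < a' := by rw [ha']; positivity
  have hb'0 : 0 < b' := by rw [hb']; positivity
  -- geometry
  have hvy : v ystar ≤ v yh := by rw [hyh]; exact v_le_pred m v ystar
  have hba : b ≤ a := by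
    rw [hadef, hbdef]
    exact (div_le_div_iff_of_pos_right hT).mpr (Real.exp_le_exp.mpr hvy)
  have hs1 : a + b ≤ 1 := by
    have hsub : ∑ y ∈ ({yh, ystar} : Finset (Fin (m+2))), Real.exp (v y) ≤ T := by
      rw [hTdef]
      exact Finset.sum_le_sum_of_subset_of_nonneg (Finset.subset_univ _)
        (fun y _ _ => (Real.exp_pos _).le)
    rw [Finset.sum_pair hyne] at hsub
    rw [hadef, hbdef, ← add_div, div_le_one hT]
    exact hsub
  have haN : 1/N ≤ a := by
    have hTle : T ≤ N * Real.exp (v yh) := by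
      rw [hTdef, hNdef]
      calc ∑ y', Real.exp (v y') ≤ ∑ _y' : Fin (m+2), Real.exp (v yh) :=
            Finset.sum_le_sum (fun y _ => Real.exp_le_exp.mpr (by rw [hyh]; exact v_le_pred m v y))
        _ = ((m+2:ℕ):ℝ) * Real.exp (v yh) := by
            rw [Finset.sum_const, Finset.card_univ, Fintype.card_fin, nsmul_eq_mul]
    rw [hadef, div_le_div_iff₀ hN0 hT]
    linarith
  -- the comparator
  obtain ⟨w, hwdef⟩ : ∃ w : Fin (m+2) → ℝ,
      w = Function.update (Function.update v yh (Real.log (T * a'))) ystar (Real.log (T * b')) :=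
    ⟨_, rfl⟩
  have hwyh : w yh = Real.log (T * a') := by
    rw [hwdef, Function.update_of_ne hyne, Function.update_self]
  have hwystar : w ystar = Real.log (T * b') := by
    rw [hwdef, Function.update_self]
  have hwoff : ∀ y, y ≠ yh → y ≠ ystar → w y = v y := by
    intro y h1 h2
    rw [hwdef, Function.update_of_ne h2, Function.update_of_ne h1]
  have hewyh : Real.exp (w yh) = T * a' := by
    rw [hwyh, Real.exp_log (by positivity)]
  have hewystar : Real.exp (w ystar) = T * b' := by
    rw [hwystar, Real.exp_log (by positivity)]
  have ha'b' : T * a' + T * b' = Real.exp (v yh) + Real.exp (v ystar) := by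
    have h1 : Real.exp (v yh) = T * a := by rw [hadef]; field_simp
    have h2 : Real.exp (v ystar) = T * b := by rw [hbdef]; field_simp
    rw [ha', hb', h1, h2, hs₀, hσ]
    field_simp
    ring
  have hsumw : ∑ y', Real.exp (w y') = T := by
    have hd := sum_diff_pair (fun y => Real.exp (w y)) (fun y => Real.exp (v y)) yh ystar hyne
      (fun y h1 h2 => by
        show Real.exp (w y) = Real.exp (v y)
        rw [hwoff y h1 h2])
    rw [hewyh, hewystar] at hd
    linarith [hd, ha'b', hTdef.le, hTdef.ge]
  -- risk difference
  have hW : condSurRisk m μ c p v - condSurRisk m μ c p w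
      = β*(phi μ a - phi μ a') + α*(phi μ b - phi μ b') := by
    unfold condSurRisk
    have hd := sum_diff_pair (fun y => pext m c p y * ellmu m μ v y)
      (fun y => pext m c p y * ellmu m μ w y) yh ystar hyne
      (fun y h1 h2 => by
        show pext m c p y * ellmu m μ v y = pext m c p y * ellmu m μ w y
        rw [ellmu_eq_phi, ellmu_eq_phi, hwoff y h1 h2]
        congr 2
        rw [hsumw, hTdef])
    rw [hd]
    have e1 : ellmu m μ v yh = phi μ a := by
      rw [ellmu_eq_phi, hadef, hTdef]
    have e2 : ellmu m μ v ystar = phi μ b := by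
      rw [ellmu_eq_phi, hbdef, hTdef]
    have e3 : ellmu m μ w yh = phi μ a' := by
      rw [ellmu_eq_phi, hsumw, hewyh, mul_div_cancel_left₀ _ hT.ne']
    have e4 : ellmu m μ w ystar = phi μ b' := by
      rw [ellmu_eq_phi, hsumw, hewystar, mul_div_cancel_left₀ _ hT.ne']
    rw [e1, e2, e3, e4, hαdef, hβdef]
    ring
  refine ⟨w, ?_⟩
  rw [← hαdef, ← hβdef, ← hNdef, hW, ← hβ', ← hσ]
  by_cases hμe : μ = 1
  · subst hμe
    rw [if_pos rfl]
    have hcore := core_eq N α β a b η β' σ s₀ a' b' hN2 hβ0' hη0 hηα' hα1'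
      hb0 hba hs1 haN hβ' hσ hs₀ ha' hb'
    have hexp : N ^ ((1:ℝ)-1) = 1 := by norm_num
    rw [hexp]
    calc (α - β')^2 ≤ 2*σ * ((β*(phi 1 a - phi 1 a') + α*(phi 1 b - phi 1 b')) + η * Real.log N) := hcore
      _ = 2*σ*1*((β*(phi 1 a - phi 1 a') + α*(phi 1 b - phi 1 b')) + η * Real.log N) := by ring
  · rw [if_neg hμe]
    exact core_gt μ N α β a b η β' σ s₀ a' b' (lt_of_le_of_ne hμ1 (Ne.symm hμe)) hμ2 hN2
      hβ0' hη0 hηα' hα1' hb0 hba hs1 haN hβ' hσ hs₀ ha' hb'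

end helpers

open Real in
set_option maxHeartbeats 1600000 in
/-- **Theorem (H-consistency bound for cross-entropy score-based surrogates, conditional
form, case `μ ∈ [1,2)`).** The abstention calibration gap is bounded by
`sqrt(2 · (2-c) · (n+1)^(μ-1) · ΔC_μ(v,p))`, where `n + 1 = m + 2` and the calibration gaps
are taken over all score vectors (symmetric and complete hypothesis set). -/
theorem stmt_3 (m : ℕ) (hm : 1 ≤ m) (c : ℝ) (hc : c ∈ Set.Ioo (0 : ℝ) 1)
    (μ : ℝ) (hμ : μ ∈ Set.Ico (1 : ℝ) 2)
    (p : Fin (m + 1) → ℝ) (hp0 : ∀ y, 0 ≤ p y) (hp1 : ∑ y, p y = 1)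
    (v : Fin (m + 2) → ℝ) :
    condAbsRisk m c p v - ⨅ w, condAbsRisk m c p w
      ≤ Real.sqrt (2 * (2 - c) * ((m + 2 : ℕ) : ℝ) ^ (μ - 1) *
          (condSurRisk m μ c p v - ⨅ w, condSurRisk m μ c p w)) := by
  obtain ⟨hc0, hc1⟩ := hc
  obtain ⟨hμ1, hμ2⟩ := hμ
  obtain ⟨ystar, -, hystar⟩ := Finset.exists_max_image Finset.univ (pext m c p)
    ⟨Fin.last (m+1), Finset.mem_univ _⟩
  have hymax : ∀ y, pext m c p y ≤ pext m c p ystar := fun y => hystar y (Finset.mem_univ y)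
  obtain ⟨yh, hyh⟩ : ∃ yh, yh = pred m v := ⟨_, rfl⟩
  obtain ⟨α, hα⟩ : ∃ x : ℝ, x = pext m c p ystar := ⟨_, rfl⟩
  obtain ⟨β, hβ⟩ : ∃ x : ℝ, x = pext m c p yh := ⟨_, rfl⟩
  obtain ⟨B, hB⟩ : ∃ x : ℝ, x = condSurRisk m μ c p v - ⨅ w, condSurRisk m μ c p w := ⟨_, rfl⟩
  obtain ⟨N, hN⟩ : ∃ x : ℝ, x = ((m+2:ℕ):ℝ) := ⟨_, rfl⟩
  have hN2 : 2 ≤ N := by rw [hN]; push_cast; linarith [Nat.cast_nonneg (α := ℝ) m]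
  have hNt0 : (0:ℝ) < N^(μ-1) := Real.rpow_pos_of_pos (by linarith) _
  -- abstention side
  have habs : condAbsRisk m c p v - ⨅ w, condAbsRisk m c p w ≤ α - β := by
    have h1 : (1:ℝ) - α ≤ ⨅ w, condAbsRisk m c p w := by
      apply le_ciInf
      intro w
      unfold condAbsRisk
      have := hymax (pred m w)
      rw [hα]
      linarith
    have h2 : condAbsRisk m c p v = 1 - β := by unfold condAbsRisk; rw [hβ, hyh]
    linarith
  -- surrogate side basic facts
  have hBdd : BddBelow (Set.range (condSurRisk m μ c p)) := by
    refine ⟨0, ?_⟩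
    rintro x ⟨w, rfl⟩
    exact condSurRisk_nonneg m μ c p hp0 hc1.le hμ1 w
  have hB0 : 0 ≤ B := by
    rw [hB]
    have := ciInf_le hBdd v
    linarith
  rcases le_or_gt (α - β) 0 with hΔ | hΔ
  · exact le_trans habs (le_trans hΔ (Real.sqrt_nonneg _))
  have hyne : yh ≠ ystar := by
    intro h
    rw [hα, hβ, h] at hΔ
    linarith
  have hβ0 : 0 ≤ β := hβ ▸ pext_nonneg hp0 hc1.le yh
  have hα1 : α ≤ 1 := hα ▸ pext_le_one hp0 hp1 hc0.le ystar
  have hpair : α + β ≤ 2 - c := by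
    have hsub : ∑ y ∈ ({ystar, yh} : Finset (Fin (m+2))), pext m c p y ≤ ∑ y, pext m c p y :=
      Finset.sum_le_sum_of_subset_of_nonneg (Finset.subset_univ _)
        (fun y _ _ => pext_nonneg hp0 hc1.le y)
    rw [Finset.sum_pair (Ne.symm hyne), sum_pext hp1] at hsub
    rw [hα, hβ]
    linarith
  obtain ⟨Cp, hCp⟩ : ∃ x : ℝ, x = (if μ = 1 then Real.log N else 1/(μ-1)) := ⟨_, rfl⟩
  have hCp0 : 0 ≤ Cp := by
    rw [hCp]
    split_ifs with h
    · exact Real.log_nonneg (by linarith)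
    · have h10 : 0 < μ - 1 := by
        have := lt_of_le_of_ne hμ1 (Ne.symm h); linarith
      positivity
  obtain ⟨Cpen, hCpen⟩ : ∃ x : ℝ, x = 2*N^(μ-1)*B + 6*N^(μ-1)*Cp + 3 := ⟨_, rfl⟩
  have hCpen0 : 0 ≤ Cpen := by
    rw [hCpen]
    have := mul_nonneg (mul_nonneg (by norm_num : (0:ℝ) ≤ 2) hNt0.le) hB0
    have := mul_nonneg (mul_nonneg (by norm_num : (0:ℝ) ≤ 6) hNt0.le) hCp0
    linarith
  -- key step
  have hkey : ∀ η : ℝ, 0 < η → η ≤ 1 → β + η ≤ α →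
      (α-β)^2 ≤ 2*(2-c)*N^(μ-1)*B + η*Cpen := by
    intro η hη0 hη1 hηα
    obtain ⟨w, hw⟩ := exists_comparator m μ c η p v hμ1 hμ2 ystar yh hyne hyh
      (hβ ▸ hβ0) (hα ▸ hα1) hη0 (by rw [← hα, ← hβ]; exact hηα)
    rw [← hα, ← hβ, ← hN, ← hCp] at hw
    have hWB : condSurRisk m μ c p v - condSurRisk m μ c p w ≤ B := by
      rw [hB]
      have := ciInf_le hBdd w
      linarith
    have h2σ : (0:ℝ) < 2*(α + (β + η)) * N^(μ-1) :=
      mul_pos (by linarith : (0:ℝ) < 2*(α + (β + η))) hNt0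
    have hstep2 : 0 ≤ (condSurRisk m μ c p v - condSurRisk m μ c p w) + η * Cp := by
      by_contra hneg
      push_neg at hneg
      have hlt : 2*(α + (β + η)) * N^(μ-1) *
          ((condSurRisk m μ c p v - condSurRisk m μ c p w) + η * Cp) < 0 :=
        mul_neg_of_pos_of_neg h2σ hneg
      nlinarith [sq_nonneg (α - (β + η)), hw]
    have hc1' : (condSurRisk m μ c p v - condSurRisk m μ c p w) + η * Cp ≤ B + η*Cp := by
      linarith
    have hf1 : 2*(α + (β + η)) * N^(μ-1) ≤ 2*(2-c+η) * N^(μ-1) :=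
      mul_le_mul_of_nonneg_right (by linarith) hNt0.le
    have hstep3 : (α-(β+η))^2 ≤ 2*(2-c+η)*N^(μ-1)*(B + η*Cp) :=
      le_trans hw (mul_le_mul hf1 hc1' hstep2 (mul_nonneg (by linarith) hNt0.le))
    have hexpand : 2*(2-c+η)*N^(μ-1)*(B + η*Cp)
        ≤ 2*(2-c)*N^(μ-1)*B + η*(2*N^(μ-1)*B + 6*N^(μ-1)*Cp) := by
      nlinarith [mul_nonneg (mul_nonneg (mul_nonneg hη0.le hNt0.le) hCp0)
          (show (0:ℝ) ≤ 1 + c - η by linarith),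
        mul_nonneg (mul_nonneg hη0.le hNt0.le) hB0,
        mul_nonneg (mul_nonneg hη0.le hNt0.le) hCp0]
    have hΔexp : (α-β)^2 ≤ (α-(β+η))^2 + 3*η := by nlinarith
    have hCeq : η*Cpen = η*(2*N^(μ-1)*B + 6*N^(μ-1)*Cp) + 3*η := by rw [hCpen]; ring
    linarith
  -- pass to the limit η → 0
  have hfinal : (α-β)^2 ≤ 2*(2-c)*N^(μ-1)*B := by
    by_contra hcon
    push_neg at hcon
    obtain ⟨ε, hε⟩ : ∃ x : ℝ, x = (α-β)^2 - 2*(2-c)*N^(μ-1)*B := ⟨_, rfl⟩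
    have hε0 : 0 < ε := by rw [hε]; linarith
    obtain ⟨η, hηdef⟩ : ∃ x : ℝ, x = min (min (α-β) 1) (ε/(2*(Cpen+1))) := ⟨_, rfl⟩
    have hη0 : 0 < η := by
      rw [hηdef]
      exact lt_min (lt_min hΔ one_pos) (by positivity)
    have hη1 : η ≤ 1 := by
      rw [hηdef]
      exact le_trans (min_le_left _ _) (min_le_right _ _)
    have hηΔ : β + η ≤ α := by
      have : η ≤ α - β := by
        rw [hηdef]
        exact le_trans (min_le_left _ _) (min_le_left _ _)
      linarith
    have hη2 : η ≤ ε/(2*(Cpen+1)) := by rw [hηdef]; exact min_le_right _ _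
    have hbound := hkey η hη0 hη1 hηΔ
    have hsmall : η*Cpen < ε := by
      have h1 : η*Cpen ≤ (ε/(2*(Cpen+1)))*Cpen := mul_le_mul_of_nonneg_right hη2 hCpen0
      have h2 : (ε/(2*(Cpen+1)))*Cpen < ε := by
        rw [div_mul_eq_mul_div, div_lt_iff₀ (by positivity)]
        nlinarith
      linarith
    rw [hε] at hsmall
    linarith
  have hsq : α - β ≤ Real.sqrt (2*(2-c)*N^(μ-1)*B) := by
    rw [← Real.sqrt_sq hΔ.le]
    exact Real.sqrt_le_sqrt hfinal
  rw [← hN, ← hB]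
  linarith
end

section
/- Theorem (general transformation of H-consistency bounds, conditional form). Let S ⊆ ℝ^{n+1} be a nonempty set of score vectors, ℓ : ℝ^{n+1} × {1,...,n+1} → [0,∞) an arbitrary surrogate loss, and Γ : [0,∞) → [0,∞) a function. For a probability vector q on {1,...,n+1} set C_ℓ(v,q) = Σ_{y=1}^{n+1} q(y) ℓ(v,y) and C_{01}(v,q) = 1 − q(𝗁(v)) (the conditional zero-one risk over n+1 labels). Assume that for every probability vector q on {1,...,n+1} and every v ∈ S: C_{01}(v,q) − inf_{w∈S} C_{01}(w,q) ≤ Γ( C_ℓ(v,q) − inf_{w∈S} C_ℓ(w,q) ). Define the abstention surrogate L(v,y) = ℓ(v,y) + (1−c) ℓ(v, n+1) for y ∈ {1,...,n}, with conditional risk C_L(v,p) = Σ_{y=1}^{n} p(y) L(v,y). Then for every conditional probability vector p on {1,...,n} and every v ∈ S: C_abs(v,p) − inf_{w∈S} C_abs(w,p) ≤ (2 − c) · Γ( (C_L(v,p) − inf_{w∈S} C_L(w,p)) / (2 − c) ). -/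
/-- **Theorem (general transformation of H-consistency bounds, conditional form).**
If the surrogate `ℓ` admits a conditional calibration bound with function `Γ` with respect
to the zero-one loss over `n + 1` labels (for every probability vector `q` on the `n + 1`
labels and every `v ∈ S`), then the abstention surrogate
`L(v, y) = ℓ(v, y) + (1 - c) ℓ(v, n+1)` admits the bound
`ΔC_abs ≤ (2 - c) Γ(ΔC_L / (2 - c))`. -/
theorem stmt_7 (m : ℕ) (hm : 1 ≤ m) (c : ℝ) (hc : c ∈ Set.Ioo (0 : ℝ) 1)
    (S : Set (Fin (m + 2) → ℝ)) (hS : S.Nonempty)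
    (ℓ : (Fin (m + 2) → ℝ) → Fin (m + 2) → ℝ) (hℓ : ∀ v y, 0 ≤ ℓ v y)
    (Γ : ℝ → ℝ)
    (hbound : ∀ q : Fin (m + 2) → ℝ, (∀ y, 0 ≤ q y) → (∑ y, q y) = 1 →
      ∀ v ∈ S,
        (1 - q (pred m v)) - sInf ((fun w => 1 - q (pred m w)) '' S)
          ≤ Γ ((∑ y, q y * ℓ v y) - sInf ((fun w => ∑ y, q y * ℓ w y) '' S)))
    (p : Fin (m + 1) → ℝ) (hp0 : ∀ y, 0 ≤ p y) (hp1 : ∑ y, p y = 1)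
    (v : Fin (m + 2) → ℝ) (hv : v ∈ S) :
    condAbsRisk m c p v - sInf (condAbsRisk m c p '' S)
      ≤ (2 - c) *
        Γ (((∑ y : Fin (m + 1),
              p y * (ℓ v y.castSucc + (1 - c) * ℓ v (Fin.last (m + 1))))
            - sInf ((fun w => ∑ y : Fin (m + 1),
                p y * (ℓ w y.castSucc + (1 - c) * ℓ w (Fin.last (m + 1)))) '' S))
          / (2 - c)) := by
  obtain ⟨hc0, hc1⟩ := hc
  set t : ℝ := 2 - c with ht_def
  have ht : (0:ℝ) < t := by simp [ht_def]; linarith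
  have htne : t ≠ 0 := ne_of_gt ht
  set q : Fin (m + 2) → ℝ := fun y => pext m c p y / t with hq_def
  -- basic facts on pext
  have hpext0 : ∀ y, 0 ≤ pext m c p y := by
    intro y
    refine Fin.lastCases ?_ ?_ y
    · simp [pext, Fin.snoc_last]; linarith
    · intro i; simpa [pext, Fin.snoc_castSucc] using hp0 i
  have hpext_le : ∀ y, pext m c p y ≤ t := by
    intro y
    refine Fin.lastCases ?_ ?_ y
    · simp only [pext, Fin.snoc_last, ht_def]; linarith
    · intro i
      have : p i ≤ ∑ j, p j := Finset.single_le_sum (fun j _ => hp0 j) (Finset.mem_univ i)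
      simp only [pext, Fin.snoc_castSucc]
      rw [hp1] at this; linarith
  have hq0 : ∀ y, 0 ≤ q y := fun y => div_nonneg (hpext0 y) ht.le
  have hpext_sum : ∑ y, pext m c p y = t := by
    rw [Fin.sum_univ_castSucc]
    simp [pext, Fin.snoc_castSucc, Fin.snoc_last, hp1, ht_def]
    ring
  have hq1 : ∑ y, q y = 1 := by
    simp only [hq_def, div_eq_mul_inv, ← Finset.sum_mul, hpext_sum]
    field_simp
  -- pointwise identities
  have habs : ∀ w, condAbsRisk m c p w = t * (1 - q (pred m w)) - (1 - c) := by
    intro w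
    simp only [condAbsRisk, hq_def]
    field_simp
    ring
  have hrisk : ∀ w, (∑ y : Fin (m + 1),
      p y * (ℓ w y.castSucc + (1 - c) * ℓ w (Fin.last (m + 1))))
      = t * (∑ y, q y * ℓ w y) := by
    intro w
    have : t * (∑ y, q y * ℓ w y) = ∑ y, pext m c p y * ℓ w y := by
      rw [Finset.mul_sum]
      refine Finset.sum_congr rfl fun y _ => ?_
      simp only [hq_def]; field_simp
    have h2 : ∑ y : Fin (m + 2), pext m c p y * ℓ w y
        = (∑ y : Fin (m + 1), p y * ℓ w y.castSucc) + (1 - c) * ℓ w (Fin.last (m + 1)) := by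
      rw [Fin.sum_univ_castSucc]
      simp [pext, Fin.snoc_castSucc, Fin.snoc_last]
    rw [this, h2]
    simp only [mul_add, Finset.sum_add_distrib]
    congr 1
    rw [← Finset.sum_mul, hp1, one_mul]
  -- sInf transport
  have hBdd1 : BddBelow ((fun w => 1 - q (pred m w)) '' S) := by
    refine ⟨0, fun x hx => ?_⟩
    obtain ⟨w, -, rfl⟩ := hx
    have h1 : q (pred m w) ≤ 1 := by
      rw [hq_def]
      exact div_le_one_of_le₀ (hpext_le _) ht.le
    dsimp only
    linarith
  have hBdd2 : BddBelow ((fun w => ∑ y, q y * ℓ w y) '' S) := by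
    refine ⟨0, fun x hx => ?_⟩
    obtain ⟨w, -, rfl⟩ := hx
    dsimp only
    exact Finset.sum_nonneg fun y _ => mul_nonneg (hq0 y) (hℓ w y)
  have hNe1 : ((fun w => 1 - q (pred m w)) '' S).Nonempty := hS.image _
  have hNe2 : ((fun w => ∑ y, q y * ℓ w y) '' S).Nonempty := hS.image _
  have habs_inf : sInf (condAbsRisk m c p '' S)
      = t * sInf ((fun w => 1 - q (pred m w)) '' S) - (1 - c) := by
    have hmono : Monotone (fun x : ℝ => t * x - (1 - c)) := by
      intro a b hab
      dsimp only
      nlinarith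
    have := hmono.map_csInf_of_continuousAt (by fun_prop) hNe1 hBdd1
    rw [this, Set.image_image]
    congr 1
    ext x
    simp only [Set.mem_image]
    constructor
    · rintro ⟨w, hw, rfl⟩; exact ⟨w, hw, (habs w).symm⟩
    · rintro ⟨w, hw, hwx⟩; exact ⟨w, hw, by rw [← hwx, habs w]⟩
  have hrisk_inf : sInf ((fun w => ∑ y : Fin (m + 1),
        p y * (ℓ w y.castSucc + (1 - c) * ℓ w (Fin.last (m + 1)))) '' S)
      = t * sInf ((fun w => ∑ y, q y * ℓ w y) '' S) := by
    have hmono : Monotone (fun x : ℝ => t * x) := by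
      intro a b hab
      exact mul_le_mul_of_nonneg_left hab ht.le
    have := hmono.map_csInf_of_continuousAt (by fun_prop) hNe2 hBdd2
    rw [this, Set.image_image]
    congr 1
    ext x
    simp only [Set.mem_image]
    constructor
    · rintro ⟨w, hw, rfl⟩; exact ⟨w, hw, (hrisk w).symm⟩
    · rintro ⟨w, hw, hwx⟩; exact ⟨w, hw, by rw [← hwx, hrisk w]⟩
  have hkey := hbound q hq0 hq1 v hv
  have hargeq : ((∑ y : Fin (m + 1),
        p y * (ℓ v y.castSucc + (1 - c) * ℓ v (Fin.last (m + 1))))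
      - sInf ((fun w => ∑ y : Fin (m + 1),
          p y * (ℓ w y.castSucc + (1 - c) * ℓ w (Fin.last (m + 1)))) '' S)) / t
      = (∑ y, q y * ℓ v y) - sInf ((fun w => ∑ y, q y * ℓ w y) '' S) := by
    rw [hrisk v, hrisk_inf]
    field_simp
  rw [habs v, habs_inf, hargeq]
  calc t * (1 - q (pred m v)) - (1 - c) - (t * sInf ((fun w => 1 - q (pred m w)) '' S) - (1 - c))
      = t * ((1 - q (pred m v)) - sInf ((fun w => 1 - q (pred m w)) '' S)) := by ring
    _ ≤ t * Γ ((∑ y, q y * ℓ v y) - sInf ((fun w => ∑ y, q y * ℓ w y) '' S)) :=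
        mul_le_mul_of_nonneg_left hkey ht.le
end

section
/- Lemma (rescaling identity between abstention and zero-one calibration gaps). Let p be a conditional probability vector on {1,...,n} and c ∈ (0,1). Define the probability vector p̄ on {1,...,n+1} by p̄(y) = p(y)/(2−c) for y ∈ {1,...,n} and p̄(n+1) = (1−c)/(2−c); then p̄(y) ≥ 0 and Σ_{y=1}^{n+1} p̄(y) = 1. For any nonempty S ⊆ ℝ^{n+1} and any v ∈ S, the abstention calibration gap equals (2−c) times the zero-one calibration gap under p̄: C_abs(v,p) − inf_{w∈S} C_abs(w,p) = (2 − c) · [ C_{01}(v,p̄) − inf_{w∈S} C_{01}(w,p̄) ], where C_{01}(v,q) = 1 − q(𝗁(v)) denotes the conditional zero-one risk over n+1 labels. -/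

lemma sInf_affine_aux (a b : ℝ) (hb : 0 < b) (A : Set ℝ) (hA : A.Nonempty)
    (hbd : BddBelow A) : sInf ((fun x => a + b * x) '' A) = a + b * sInf A := by
  have hmono : Monotone (fun x : ℝ => a + b * x) := fun x y hxy => by
    have := mul_le_mul_of_nonneg_left hxy hb.le
    dsimp only
    linarith
  have := hmono.map_csInf_of_continuousAt (by fun_prop) hA hbd
  exact this.symm

/-- **Lemma (rescaling identity between abstention and zero-one calibration gaps).**
With `p̄(y) = p(y)/(2-c)` for class labels and `p̄(n+1) = (1-c)/(2-c)`, the vector `p̄` is a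
probability vector on the `n + 1` labels, and for any nonempty `S` and any `v ∈ S` the
abstention calibration gap equals `(2 - c)` times the zero-one calibration gap under `p̄`. -/
theorem stmt_8 (m : ℕ) (hm : 1 ≤ m) (c : ℝ) (hc : c ∈ Set.Ioo (0 : ℝ) 1)
    (p : Fin (m + 1) → ℝ) (hp0 : ∀ y, 0 ≤ p y) (hp1 : ∑ y, p y = 1)
    (S : Set (Fin (m + 2) → ℝ)) (hS : S.Nonempty) :
    (∀ y, 0 ≤ (Fin.snoc (fun y : Fin (m + 1) => p y / (2 - c)) ((1 - c) / (2 - c)) :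
        Fin (m + 2) → ℝ) y) ∧
    (∑ y, (Fin.snoc (fun y : Fin (m + 1) => p y / (2 - c)) ((1 - c) / (2 - c)) :
        Fin (m + 2) → ℝ) y = 1) ∧
    ∀ v ∈ S,
      condAbsRisk m c p v - sInf (condAbsRisk m c p '' S)
        = (2 - c) *
          ((1 - (Fin.snoc (fun y : Fin (m + 1) => p y / (2 - c)) ((1 - c) / (2 - c)) :
              Fin (m + 2) → ℝ) (pred m v))
            - sInf ((fun w =>
                1 - (Fin.snoc (fun y : Fin (m + 1) => p y / (2 - c)) ((1 - c) / (2 - c)) :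
                  Fin (m + 2) → ℝ) (pred m w)) '' S)) := by

  obtain ⟨hc0, hc1⟩ := hc
  have h2c : (0:ℝ) < 2 - c := by linarith
  have h2c' : (2:ℝ) - c ≠ 0 := ne_of_gt h2c
  set pb : Fin (m + 2) → ℝ :=
    (Fin.snoc (fun y : Fin (m + 1) => p y / (2 - c)) ((1 - c) / (2 - c))) with hpb
  have hpbeq : ∀ y, pb y = pext m c p y / (2 - c) := by
    intro y
    refine Fin.lastCases ?_ ?_ y
    · simp [hpb, pext]
    · intro i; simp [hpb, pext]
  have hpbnn : ∀ y, 0 ≤ pb y := by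
    intro y
    rw [hpbeq]
    apply div_nonneg _ h2c.le
    refine Fin.lastCases ?_ ?_ y
    · simp [pext]; linarith
    · intro i; simp [pext]; exact hp0 i
  refine ⟨hpbnn, ?_, ?_⟩
  · rw [show (∑ y, pb y) = (∑ i : Fin (m+1), pb i.castSucc) + pb (Fin.last (m+1)) from
      Fin.sum_univ_castSucc pb]
    have : ∀ i : Fin (m+1), pb i.castSucc = p i / (2 - c) := by
      intro i; simp [hpb]
    rw [Finset.sum_congr rfl (fun i _ => this i)]
    rw [show pb (Fin.last (m+1)) = (1 - c)/(2-c) from by simp [hpb]]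
    rw [← Finset.sum_div, hp1]
    field_simp
    ring
  · -- main identity
    have hkey : ∀ w, (1 : ℝ) - pb (pred m w)
        = (1 - c)/(2 - c) + (1/(2-c)) * condAbsRisk m c p w := by
      intro w
      rw [hpbeq, condAbsRisk]
      field_simp
      ring
    have himg : ((fun w => 1 - pb (pred m w)) '' S)
        = (fun x => (1 - c)/(2-c) + (1/(2-c)) * x) '' (condAbsRisk m c p '' S) := by
      rw [← Set.image_comp]
      exact Set.image_congr (fun w _ => hkey w)
    have hAne : (condAbsRisk m c p '' S).Nonempty := hS.image _
    have hbd : BddBelow (condAbsRisk m c p '' S) := by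
      refine ⟨0, ?_⟩
      rintro x ⟨w, -, rfl⟩
      have hle1 : pext m c p (pred m w) ≤ 1 := by
        refine Fin.lastCases ?_ ?_ (pred m w)
        · simp [pext]; linarith
        · intro i; simp only [pext, Fin.snoc_castSucc]
          calc p i ≤ ∑ y, p y := Finset.single_le_sum (fun j _ => hp0 j) (Finset.mem_univ i)
          _ = 1 := hp1
      simp [condAbsRisk]; linarith
    have hsinf : sInf ((fun w => 1 - pb (pred m w)) '' S)
        = (1 - c)/(2-c) + (1/(2-c)) * sInf (condAbsRisk m c p '' S) := by
      rw [himg]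
      exact sInf_affine_aux _ _ (by positivity) _ hAne hbd
    intro v hv
    rw [hkey v, hsinf]
    field_simp
    ring
end

section
/- Lemma (power-mean excess inequality for μ ∈ (1,2)). Let c ∈ (0,1), μ ∈ (1,2), and let a, b ≥ 0 satisfy a + b ≤ 2 − c. Then ( (a^{1/(2−μ)} + b^{1/(2−μ)})/2 )^{2−μ} − (a + b)/2 ≥ (μ − 1)·(a − b)² / ( 4·(2 − c) ). -/
open Real Set

/-- `log(1+t) ≥ t²/2` for `t ∈ [0,1]`. -/
lemma log_ge_half_sq {t : ℝ} (ht0 : 0 ≤ t) (ht1 : t ≤ 1) : t ^ 2 / 2 ≤ Real.log (1 + t) := by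
  have h1t : (0:ℝ) < 1 + t := by linarith
  have h := Real.one_sub_inv_le_log_of_pos h1t
  have hinv : (1 + t) * (1 + t)⁻¹ = 1 := mul_inv_cancel₀ h1t.ne'
  nlinarith [sq_nonneg t, mul_pos h1t (inv_pos.mpr h1t)]

/-- `artanh` bound: `log(1+t) - log(1-t) ≥ 2t` on `[0,1)`. -/
lemma two_mul_le_log_div {t : ℝ} (ht0 : 0 ≤ t) (ht1 : t < 1) :
    2 * t ≤ Real.log (1 + t) - Real.log (1 - t) := by
  set f : ℝ → ℝ := fun s => Real.log (1 + s) - Real.log (1 - s) - 2 * s with hf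
  have hder : ∀ s ∈ Set.Ioo (0:ℝ) 1,
      HasDerivAt f (1 / (1 + s) - (-1) / (1 - s) - 2 * 1) s := by
    intro s hs
    have h1 : (0:ℝ) < 1 + s := by linarith [hs.1]
    have h2 : (0:ℝ) < 1 - s := by linarith [hs.2]
    have d1 : HasDerivAt (fun x : ℝ => Real.log (1 + x)) (1 / (1 + s)) s :=
      ((hasDerivAt_id s).const_add 1).log h1.ne'
    have d2 : HasDerivAt (fun x : ℝ => Real.log (1 - x)) ((-1) / (1 - s)) s :=
      ((hasDerivAt_id s).const_sub 1).log h2.ne'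
    exact (d1.sub d2).sub ((hasDerivAt_id s).const_mul 2)
  have hcont : ContinuousOn f (Set.Ico (0:ℝ) 1) := by
    apply ContinuousOn.sub
    apply ContinuousOn.sub
    · exact (continuous_const.add continuous_id).continuousOn.log
        (fun x hx => by have := hx.1; intro h; simp only [Pi.add_apply, Pi.sub_apply, id_eq] at h; linarith)
    · exact (continuous_const.sub continuous_id).continuousOn.log
        (fun x hx => by have := hx.2; intro h; simp only [Pi.add_apply, Pi.sub_apply, id_eq] at h; linarith)
    · exact (continuous_const.mul continuous_id).continuousOn
  have hmono : MonotoneOn f (Set.Ico (0:ℝ) 1) := by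
    apply monotoneOn_of_deriv_nonneg (convex_Ico 0 1) hcont
    · intro x hx
      rw [interior_Ico] at hx
      exact ((hder x hx).differentiableAt).differentiableWithinAt
    · intro x hx
      rw [interior_Ico] at hx
      rw [(hder x hx).deriv]
      have h1 : (0:ℝ) < 1 + x := by linarith [hx.1]
      have h2 : (0:ℝ) < 1 - x := by linarith [hx.2]
      have key : 1 / (1 + x) - (-1) / (1 - x) - 2 * 1
          = 2 * x ^ 2 / ((1 + x) * (1 - x)) := by
        field_simp
        ring
      rw [key]
      positivity
  have h0 : f 0 ≤ f t := hmono ⟨le_refl _, one_pos⟩ ⟨ht0, ht1⟩ ht0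
  simp only [hf] at h0
  norm_num at h0
  linarith

/-- Entropy inequality: `(1+t)log(1+t) + (1-t)log(1-t) ≥ t²` on `[0,1)`. -/
lemma entropy_ge_sq {t : ℝ} (ht0 : 0 ≤ t) (ht1 : t < 1) :
    t ^ 2 ≤ (1 + t) * Real.log (1 + t) + (1 - t) * Real.log (1 - t) := by
  set f : ℝ → ℝ := fun s => (1 + s) * Real.log (1 + s) + (1 - s) * Real.log (1 - s) - s ^ 2
    with hf
  have hder : ∀ s ∈ Set.Ioo (0:ℝ) 1,
      HasDerivAt f ((Real.log (1 + s) - Real.log (1 - s) - 2 * s)) s := by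
    intro s hs
    have h1 : (0:ℝ) < 1 + s := by linarith [hs.1]
    have h2 : (0:ℝ) < 1 - s := by linarith [hs.2]
    have d1 : HasDerivAt (fun x : ℝ => Real.log (1 + x)) (1 / (1 + s)) s :=
      ((hasDerivAt_id s).const_add 1).log h1.ne'
    have d2 : HasDerivAt (fun x : ℝ => Real.log (1 - x)) ((-1) / (1 - s)) s :=
      ((hasDerivAt_id s).const_sub 1).log h2.ne'
    have e1 : HasDerivAt (fun x : ℝ => (1 + x) * Real.log (1 + x))
        (1 * Real.log (1 + s) + (1 + s) * (1 / (1 + s))) s :=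
      ((hasDerivAt_id s).const_add 1).mul d1
    have e2 : HasDerivAt (fun x : ℝ => (1 - x) * Real.log (1 - x))
        ((-1) * Real.log (1 - s) + (1 - s) * ((-1) / (1 - s))) s :=
      ((hasDerivAt_id s).const_sub 1).mul d2
    have e3 : HasDerivAt (fun x : ℝ => x ^ 2) (2 * s) s := by
      simpa using hasDerivAt_pow 2 s
    have := (e1.add e2).sub e3
    refine this.congr_deriv ?_
    rw [mul_one_div_cancel h1.ne', mul_div_assoc', mul_comm (1 - s) (-1), mul_div_assoc, div_self h2.ne']
    ring
  have hcont : ContinuousOn f (Set.Ico (0:ℝ) 1) := by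
    apply ContinuousOn.sub
    apply ContinuousOn.add
    · exact (continuous_const.add continuous_id).continuousOn.mul
        ((continuous_const.add continuous_id).continuousOn.log
          (fun x hx => by have := hx.1; intro h; simp only [Pi.add_apply, Pi.sub_apply, id_eq] at h; linarith))
    · exact (continuous_const.sub continuous_id).continuousOn.mul
        ((continuous_const.sub continuous_id).continuousOn.log
          (fun x hx => by have := hx.2; intro h; simp only [Pi.add_apply, Pi.sub_apply, id_eq] at h; linarith))
    · exact (continuous_pow 2).continuousOn
  have hmono : MonotoneOn f (Set.Ico (0:ℝ) 1) := by
    apply monotoneOn_of_deriv_nonneg (convex_Ico 0 1) hcont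
    · intro x hx
      rw [interior_Ico] at hx
      exact ((hder x hx).differentiableAt).differentiableWithinAt
    · intro x hx
      rw [interior_Ico] at hx
      rw [(hder x hx).deriv]
      have := two_mul_le_log_div (le_of_lt hx.1) hx.2
      linarith
  have h0 : f 0 ≤ f t := hmono ⟨le_refl _, one_pos⟩ ⟨ht0, ht1⟩ ht0
  simp only [hf] at h0
  norm_num at h0
  linarith

/-- Key: `((1+t)^r + (1-t)^r)/2 ≥ exp((r-1)t²/2)` for `r ≥ 1`, `t ∈ [0,1]`. -/
lemma key_exp {r t : ℝ} (hr : 1 ≤ r) (ht0 : 0 ≤ t) (ht1 : t ≤ 1) :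
    Real.exp ((r - 1) * (t ^ 2 / 2)) ≤ ((1 + t) ^ r + (1 - t) ^ r) / 2 := by
  rcases eq_or_lt_of_le ht1 with h1 | h1
  · -- t = 1
    subst h1
    have h0 : (0:ℝ) ^ r = 0 := Real.zero_rpow (by linarith)
    have h2r : (2:ℝ) ^ r = Real.exp (Real.log 2 * r) := Real.rpow_def_of_pos two_pos r
    rw [show ((1:ℝ) + 1) = 2 by norm_num, show ((1:ℝ) - 1) = 0 by norm_num, h0, h2r]
    have he : (Real.exp (Real.log 2 * r) + 0) / 2 = Real.exp (Real.log 2 * r - Real.log 2) := by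
      rw [Real.exp_sub, Real.exp_log two_pos]; ring
    rw [he]
    apply Real.exp_le_exp.2
    have hl2 : 0.6931471803 < Real.log 2 := Real.log_two_gt_d9
    nlinarith [mul_nonneg (sub_nonneg.2 hr) (show (0:ℝ) ≤ Real.log 2 - 1/2 by nlinarith)]
  · -- t < 1
    have h1t : (0:ℝ) < 1 + t := by linarith
    have h2t : (0:ℝ) < 1 - t := by linarith
    set c1 := Real.log (1 + t) with hc1def
    set c2 := Real.log (1 - t) with hc2def
    set k := t ^ 2 / 2 with hkdef
    have hk0 : 0 ≤ k := by positivity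
    have ec1 : Real.exp c1 = 1 + t := Real.exp_log h1t
    have ec2 : Real.exp c2 = 1 - t := Real.exp_log h2t
    have hc1 : 0 ≤ c1 := Real.log_nonneg (by linarith)
    have hc2 : c2 ≤ 0 := Real.log_nonpos (by linarith) (by linarith)
    have hkc1 : k ≤ c1 := log_ge_half_sq ht0 ht1
    have hK : 2 * k ≤ (1 + t) * c1 + (1 - t) * c2 := by
      have := entropy_ge_sq ht0 h1
      rw [hkdef]; linarith
    set g : ℝ → ℝ := fun s =>
      (Real.exp (s * c1) + Real.exp (s * c2)) * Real.exp (-((s - 1) * k)) with hgdef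
    have hder : ∀ s : ℝ, HasDerivAt g
        ((c1 * Real.exp (s * c1) + c2 * Real.exp (s * c2)) * Real.exp (-((s - 1) * k))
          + (Real.exp (s * c1) + Real.exp (s * c2)) * (-(1 * k) * Real.exp (-((s - 1) * k)))) s := by
      intro s
      have d1 : HasDerivAt (fun x : ℝ => Real.exp (x * c1)) (c1 * Real.exp (s * c1)) s := by
        simpa [mul_comm] using (hasDerivAt_mul_const c1 (x := s)).exp
      have d2 : HasDerivAt (fun x : ℝ => Real.exp (x * c2)) (c2 * Real.exp (s * c2)) s := by
        simpa [mul_comm] using (hasDerivAt_mul_const c2 (x := s)).exp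
      have d3 : HasDerivAt (fun x : ℝ => Real.exp (-((x - 1) * k)))
          (-(1 * k) * Real.exp (-((s - 1) * k))) s := by
        simpa [mul_comm] using ((((hasDerivAt_id s).sub_const 1).mul_const k).neg).exp
      exact (d1.add d2).mul d3
    have hmono : MonotoneOn g (Set.Ici (1:ℝ)) := by
      apply monotoneOn_of_deriv_nonneg (convex_Ici 1)
      · exact (((Real.continuous_exp.comp (continuous_id.mul continuous_const)).add
          (Real.continuous_exp.comp (continuous_id.mul continuous_const))).mul
          (Real.continuous_exp.comp (((continuous_id.sub continuous_const).mul
            continuous_const).neg))).continuousOn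
      · intro x hx
        exact ((hder x).differentiableAt).differentiableWithinAt
      · intro x hx
        rw [interior_Ici] at hx
        rw [(hder x).deriv]
        have hx1 : 1 ≤ x := le_of_lt hx
        set A := Real.exp (x * c1) with hA
        set B := Real.exp (x * c2) with hB
        have hAge : 1 + t ≤ A := by
          rw [← ec1, hA]
          exact Real.exp_le_exp.2 (by nlinarith)
        have hBle : B ≤ 1 - t := by
          rw [← ec2, hB]
          exact Real.exp_le_exp.2 (by nlinarith)
        have hBpos : 0 < B := Real.exp_pos _
        have hEpos : 0 < Real.exp (-((x - 1) * k)) := Real.exp_pos _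
        have step1 : (k - c2) * B ≤ (k - c2) * (1 - t) :=
          mul_le_mul_of_nonneg_left hBle (by linarith)
        have step2 : (k - c2) * (1 - t) ≤ (c1 - k) * (1 + t) := by nlinarith
        have step3 : (c1 - k) * (1 + t) ≤ (c1 - k) * A :=
          mul_le_mul_of_nonneg_left hAge (by linarith)
        have hbr : 0 ≤ (c1 - k) * A + (c2 - k) * B := by nlinarith
        have : (c1 * A + c2 * B) * Real.exp (-((x - 1) * k))
            + (A + B) * (-(1 * k) * Real.exp (-((x - 1) * k)))
            = Real.exp (-((x - 1) * k)) * ((c1 - k) * A + (c2 - k) * B) := by ring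
        rw [this]
        positivity
    have hg1 : g 1 = 2 := by
      simp only [hgdef]
      norm_num [ec1, ec2]
    have hgr : (2:ℝ) ≤ g r := by
      rw [← hg1]
      exact hmono (by norm_num) (by simpa using hr) hr
    -- unfold g r
    have hEpos : 0 < Real.exp ((r - 1) * k) := Real.exp_pos _
    have hginv : g r = (Real.exp (r * c1) + Real.exp (r * c2)) * (Real.exp ((r - 1) * k))⁻¹ := by
      rw [hgdef]
      simp [Real.exp_neg]
    have hmain : 2 * Real.exp ((r - 1) * k) ≤ Real.exp (r * c1) + Real.exp (r * c2) := by
      rw [hginv] at hgr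
      calc 2 * Real.exp ((r - 1) * k)
          ≤ ((Real.exp (r * c1) + Real.exp (r * c2)) * (Real.exp ((r - 1) * k))⁻¹)
            * Real.exp ((r - 1) * k) := by
            exact mul_le_mul_of_nonneg_right hgr (le_of_lt hEpos)
        _ = Real.exp (r * c1) + Real.exp (r * c2) := by
            field_simp
    have hrp1 : (1 + t) ^ r = Real.exp (r * c1) := by
      rw [Real.rpow_def_of_pos h1t, mul_comm]
    have hrp2 : (1 - t) ^ r = Real.exp (r * c2) := by
      rw [Real.rpow_def_of_pos h2t, mul_comm]
    rw [hrp1, hrp2]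
    rw [hkdef] at hmain
    linarith

lemma aux_main (c μ a b : ℝ) (hc0 : 0 < c) (hc1 : c < 1) (hμ1 : 1 < μ) (hμ2 : μ < 2)
    (hb : 0 ≤ b) (hba : b ≤ a) (hab : a + b ≤ 2 - c) :
    (μ - 1) * (a - b) ^ 2 / (4 * (2 - c))
      ≤ ((a ^ (1 / (2 - μ)) + b ^ (1 / (2 - μ))) / 2) ^ (2 - μ) - (a + b) / 2 := by
  have hp0 : (0:ℝ) < 2 - μ := by linarith
  have hp1 : 2 - μ < 1 := by linarith
  have hr1 : (1:ℝ) ≤ 1 / (2 - μ) := by rw [le_div_iff₀ hp0]; linarith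
  rcases eq_or_lt_of_le (le_trans hb hba) with h0 | h0
  · -- a = 0, hence b = 0
    have hb0 : b = 0 := le_antisymm (h0 ▸ hba) hb
    rw [← h0, hb0]
    norm_num [Real.zero_rpow (ne_of_gt (one_div_pos.mpr hp0)), Real.zero_rpow (ne_of_gt hp0)]
    positivity
  · -- 0 < a
    have hs : 0 < a + b := by linarith
    set s := a + b with hsdef
    set m := s / 2 with hmdef
    have hm : 0 < m := by positivity
    set t := (a - b) / s with htdef
    have ht0 : 0 ≤ t := div_nonneg (by linarith) (le_of_lt hs)
    have ht1 : t ≤ 1 := by rw [htdef, div_le_one hs]; linarith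
    have ea : a = m * (1 + t) := by rw [hmdef, htdef]; field_simp; rw [hsdef]; ring
    have eb : b = m * (1 - t) := by rw [hmdef, htdef]; field_simp; rw [hsdef]; ring
    have h1t : (0:ℝ) ≤ 1 + t := by linarith
    have h2t : (0:ℝ) ≤ 1 - t := by linarith
    set Φ := ((1 + t) ^ (1/(2-μ)) + (1 - t) ^ (1/(2-μ))) / 2 with hΦdef
    have hΦ0 : 0 ≤ Φ := by positivity
    have hsum : (a ^ (1/(2-μ)) + b ^ (1/(2-μ))) / 2 = m ^ (1/(2-μ)) * Φ := by
      rw [hΦdef, ea, eb, Real.mul_rpow (le_of_lt hm) h1t, Real.mul_rpow (le_of_lt hm) h2t]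
      ring
    have hmr : (m ^ (1/(2-μ))) ^ (2-μ) = m := by
      rw [← Real.rpow_mul (le_of_lt hm), one_div, inv_mul_cancel₀ (ne_of_gt hp0),
        Real.rpow_one]
    have hM : ((a ^ (1/(2-μ)) + b ^ (1/(2-μ))) / 2) ^ (2-μ) = m * Φ ^ (2-μ) := by
      rw [hsum, Real.mul_rpow (by positivity) hΦ0, hmr]
    have hkey := key_exp hr1 ht0 ht1
    have h2 : Real.exp ((1/(2-μ) - 1) * (t^2/2)) ^ (2-μ) ≤ Φ ^ (2-μ) :=
      Real.rpow_le_rpow (Real.exp_pos _).le hkey (le_of_lt hp0)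
    have h3 : Real.exp ((1/(2-μ) - 1) * (t^2/2)) ^ (2-μ)
        = Real.exp ((μ-1) * (t^2/2)) := by
      rw [← Real.exp_mul]
      congr 1
      field_simp
      ring
    have h4 : 1 + (μ-1) * (t^2/2) ≤ Real.exp ((μ-1) * (t^2/2)) := by
      linarith [Real.add_one_le_exp ((μ-1) * (t^2/2))]
    have h5 : m * (1 + (μ-1) * (t^2/2)) ≤ m * Φ ^ (2-μ) := by
      apply mul_le_mul_of_nonneg_left _ (le_of_lt hm)
      rw [h3] at h2
      linarith
    have heq : m * ((μ-1) * (t^2/2)) = (μ-1) * (a-b)^2 / (4*s) := by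
      rw [hmdef, htdef]
      field_simp
      ring
    calc (μ-1) * (a-b)^2 / (4*(2-c))
        ≤ (μ-1) * (a-b)^2 / (4*s) := by
          apply div_le_div_of_nonneg_left (mul_nonneg (by linarith) (sq_nonneg _))
            (by linarith) (by linarith)
      _ = m * ((μ-1) * (t^2/2)) := heq.symm
      _ ≤ m * Φ ^ (2-μ) - s/2 := by rw [hmdef] at h5 ⊢; linarith
      _ = ((a ^ (1/(2-μ)) + b ^ (1/(2-μ))) / 2) ^ (2-μ) - s/2 := by rw [hM, hmdef]

/-- **Lemma (power-mean excess inequality for `μ ∈ (1,2)`).**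
For `c ∈ (0,1)`, `μ ∈ (1,2)` and `a, b ≥ 0` with `a + b ≤ 2 - c`,
`((a^(1/(2-μ)) + b^(1/(2-μ)))/2)^(2-μ) - (a+b)/2 ≥ (μ-1)(a-b)² / (4(2-c))`. -/
theorem stmt_13 (c μ a b : ℝ) (hc : c ∈ Set.Ioo (0 : ℝ) 1) (hμ : μ ∈ Set.Ioo (1 : ℝ) 2)
    (ha : 0 ≤ a) (hb : 0 ≤ b) (hab : a + b ≤ 2 - c) :
    (μ - 1) * (a - b) ^ 2 / (4 * (2 - c))
      ≤ ((a ^ (1 / (2 - μ)) + b ^ (1 / (2 - μ))) / 2) ^ (2 - μ) - (a + b) / 2 := by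
  obtain ⟨hc0, hc1⟩ := hc
  obtain ⟨hμ1, hμ2⟩ := hμ
  rcases le_total b a with h | h
  · exact aux_main c μ a b hc0 hc1 hμ1 hμ2 hb h hab
  · have := aux_main c μ b a hc0 hc1 hμ1 hμ2 ha h (by linarith)
    rw [show (b - a)^2 = (a - b)^2 by ring,
      add_comm (b ^ (1/(2-μ))) (a ^ (1/(2-μ))), add_comm b a] at this
    exact this
end

section
/- Proposition (pointwise minimal exponential-loss risk for a bounded hypothesis set). Let Λ > 0 and η ∈ [0,1], with the convention |log(η/(1−η))| = +∞ when η ∈ {0,1}. Then the minimum over t ∈ [−Λ, Λ] of η·e^{−t} + (1 − η)·e^{t} equals max{η, 1−η}·e^{−Λ} + min{η, 1−η}·e^{Λ} when Λ < (1/2)·|log(η/(1−η))|, and equals 2·sqrt(η(1−η)) otherwise. -/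
lemma amgm' (a b : ℝ) (ha : 0 ≤ a) (hb : 0 ≤ b) : 2 * Real.sqrt (a*b) ≤ a + b := by
  nlinarith [Real.sq_sqrt ha, Real.sq_sqrt hb, sq_nonneg (Real.sqrt a - Real.sqrt b),
    Real.sqrt_mul ha b, Real.sqrt_nonneg a, Real.sqrt_nonneg b]

lemma key_alg (a b u v : ℝ) (hu : 0 < u) (hv : 0 < v) (huv : u ≤ v)
    (h : b*(u*v) ≤ a) : a * v⁻¹ + b * v ≤ a * u⁻¹ + b * u := by
  rw [← sub_nonneg]
  have h1 : a * u⁻¹ + b * u - (a * v⁻¹ + b * v) = (v - u) * (a - b*(u*v)) / (u*v) := by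
    field_simp; ring
  rw [h1]
  exact div_nonneg (mul_nonneg (by linarith) (by linarith)) (by positivity)

lemma aux15 (Λ η : ℝ) (hΛ : 0 < Λ) (hη2 : 1/2 ≤ η) (hη1 : η ≤ 1) :
    sInf ((fun t => η * Real.exp (-t) + (1 - η) * Real.exp t) '' Set.Icc (-Λ) Λ)
      = if η = 0 ∨ η = 1 ∨ Λ < |Real.log (η / (1 - η))| / 2
        then η * Real.exp (-Λ) + (1 - η) * Real.exp Λ
        else 2 * Real.sqrt (η * (1 - η)) := by
  rcases eq_or_lt_of_le hη1 with h1 | h1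
  · subst h1
    rw [if_pos (Or.inr (Or.inl rfl))]
    apply IsLeast.csInf_eq
    constructor
    · exact ⟨Λ, ⟨by linarith, le_rfl⟩, rfl⟩
    · rintro x ⟨t, ht, rfl⟩
      simp only [sub_self, zero_mul, one_mul, add_zero]
      have := Real.exp_le_exp.2 (neg_le_neg ht.2)
      linarith
  · have hη0 : 0 < η := by linarith
    have h1η : 0 < 1 - η := by linarith
    have hr : 0 < η / (1 - η) := by positivity
    have hr1 : 1 ≤ η / (1 - η) := (one_le_div h1η).2 (by linarith)
    have hlog : 0 ≤ Real.log (η / (1 - η)) := Real.log_nonneg hr1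
    have habs : |Real.log (η / (1 - η))| = Real.log (η / (1 - η)) := abs_of_nonneg hlog
    by_cases hc : Λ < Real.log (η / (1 - η)) / 2
    · rw [if_pos (Or.inr (Or.inr (by rwa [habs])))]
      apply IsLeast.csInf_eq
      constructor
      · exact ⟨Λ, ⟨by linarith, le_rfl⟩, rfl⟩
      · rintro x ⟨t, ht, rfl⟩
        simp only
        have hkey : (1-η) * (Real.exp t * Real.exp Λ) ≤ η := by
          have h2 : Real.exp t * Real.exp Λ ≤ Real.exp (Real.log (η/(1-η))) := by
            rw [← Real.exp_add]
            exact Real.exp_le_exp.2 (by linarith [ht.2])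
          rw [Real.exp_log hr] at h2
          calc (1-η) * (Real.exp t * Real.exp Λ) ≤ (1-η) * (η/(1-η)) :=
                mul_le_mul_of_nonneg_left h2 h1η.le
            _ = η := by field_simp
        rw [Real.exp_neg, Real.exp_neg]
        exact key_alg η (1-η) _ _ (Real.exp_pos t) (Real.exp_pos Λ)
          (Real.exp_le_exp.2 ht.2) hkey
    · rw [if_neg (by push_neg; exact ⟨by linarith, by linarith, by rw [habs]; linarith [not_lt.1 hc]⟩)]
      set t₀ := Real.log (η / (1 - η)) / 2 with ht₀
      have ht₀m : t₀ ∈ Set.Icc (-Λ) Λ := by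
        constructor
        · rw [not_lt] at hc; linarith
        · rw [not_lt] at hc; linarith
      have hE : Real.exp t₀ * Real.exp t₀ = η / (1 - η) := by
        rw [← Real.exp_add, show t₀ + t₀ = Real.log (η/(1-η)) by rw [ht₀]; ring,
          Real.exp_log hr]
      have hEpos := Real.exp_pos t₀
      have hval : η * Real.exp (-t₀) + (1 - η) * Real.exp t₀ = 2 * Real.sqrt (η * (1 - η)) := by
        have hA : 0 ≤ η * Real.exp (-t₀) + (1 - η) * Real.exp t₀ := by positivity
        have hA2 : (η * Real.exp (-t₀) + (1 - η) * Real.exp t₀)^2 = 2^2 * (η * (1 - η)) := by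
          rw [Real.exp_neg]
          have hE' : Real.exp t₀ * Real.exp t₀ * (1 - η) = η := by
            rw [hE]; field_simp
          have hstep : η * (Real.exp t₀)⁻¹ + (1 - η) * Real.exp t₀ = 2 * η / Real.exp t₀ := by
            field_simp
            linear_combination hE'
          rw [hstep]
          field_simp
          linear_combination (-1 : ℝ) * hE'
        calc η * Real.exp (-t₀) + (1 - η) * Real.exp t₀
            = Real.sqrt ((η * Real.exp (-t₀) + (1 - η) * Real.exp t₀)^2) :=
              (Real.sqrt_sq hA).symm
          _ = 2 * Real.sqrt (η * (1 - η)) := by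
              rw [hA2, Real.sqrt_mul (by positivity), Real.sqrt_sq (by norm_num)]
      apply IsLeast.csInf_eq
      constructor
      · exact ⟨t₀, ht₀m, hval⟩
      · rintro x ⟨t, ht, rfl⟩
        simp only
        have hprod : (η * Real.exp (-t)) * ((1-η) * Real.exp t) = η * (1 - η) := by
          rw [Real.exp_neg]; field_simp
        have := amgm' (η * Real.exp (-t)) ((1-η) * Real.exp t) (by positivity) (by positivity)
        rw [hprod] at this
        linarith

/-- **Proposition (pointwise minimal exponential-loss risk for a bounded hypothesis set).**
For `Λ > 0` and `η ∈ [0,1]`, the minimum over `t ∈ [-Λ, Λ]` of `η e^{-t} + (1-η) e^{t}`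
equals `max{η, 1-η} e^{-Λ} + min{η, 1-η} e^{Λ}` when `Λ < (1/2)|log(η/(1-η))|` (with the
convention that `|log(η/(1-η))| = +∞` when `η ∈ {0,1}`, so that the first branch applies
there), and equals `2 √(η(1-η))` otherwise. -/
theorem stmt_15 (Λ η : ℝ) (hΛ : 0 < Λ) (hη : η ∈ Set.Icc (0 : ℝ) 1) :
    sInf ((fun t => η * Real.exp (-t) + (1 - η) * Real.exp t) '' Set.Icc (-Λ) Λ)
      = if η = 0 ∨ η = 1 ∨ Λ < |Real.log (η / (1 - η))| / 2
        then max η (1 - η) * Real.exp (-Λ) + min η (1 - η) * Real.exp Λ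
        else 2 * Real.sqrt (η * (1 - η)) := by
  obtain ⟨hη0, hη1⟩ := hη
  rcases le_or_gt (1/2) η with h | h
  · rw [aux15 Λ η hΛ h hη1, max_eq_left (by linarith), min_eq_right (by linarith)]
  · have hset : ((fun t => η * Real.exp (-t) + (1 - η) * Real.exp t) '' Set.Icc (-Λ) Λ)
        = ((fun t => (1 - η) * Real.exp (-t) + (1 - (1 - η)) * Real.exp t) '' Set.Icc (-Λ) Λ) := by
      ext x
      simp only [Set.mem_image, Set.mem_Icc]
      constructor
      · rintro ⟨t, ht, rfl⟩
        exact ⟨-t, ⟨by linarith [ht.2], by linarith [ht.1]⟩, by simp; ring⟩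
      · rintro ⟨t, ht, rfl⟩
        exact ⟨-t, ⟨by linarith [ht.2], by linarith [ht.1]⟩, by simp; ring⟩
    rw [hset, aux15 Λ (1-η) hΛ (by linarith) (by linarith),
      show (1:ℝ) - (1 - η) = η by ring]
    have habs : |Real.log ((1 - η) / η)| = |Real.log (η / (1 - η))| := by
      rw [show (1 - η) / η = (η / (1 - η))⁻¹ by rw [inv_div], Real.log_inv, abs_neg]
    have hiff : ((1 - η) = 0 ∨ (1 - η) = 1 ∨ Λ < |Real.log ((1 - η) / η)| / 2)
        ↔ (η = 0 ∨ η = 1 ∨ Λ < |Real.log (η / (1 - η))| / 2) := by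
      rw [habs]
      constructor
      · rintro (h' | h' | h')
        · exact Or.inr (Or.inl (by linarith))
        · exact Or.inl (by linarith)
        · exact Or.inr (Or.inr h')
      · rintro (h' | h' | h')
        · exact Or.inr (Or.inl (by linarith))
        · exact Or.inl (by linarith)
        · exact Or.inr (Or.inr h')
    rw [max_eq_right (by linarith : η ≤ 1 - η), min_eq_left (by linarith : η ≤ 1 - η),
      mul_comm η (1 - η)]
    exact if_congr hiff rfl rfl
end

section
/- Proposition (strict gap between approximation error and minimizability gap for the exponential loss). Let Λ > 0 and η ∈ {0, 1}. Then inf_{t ∈ [−Λ, Λ]} ( η·e^{−t} + (1 − η)·e^{t} ) − inf_{t ∈ ℝ} ( η·e^{−t} + (1 − η)·e^{t} ) = e^{−Λ}. Consequently, for a deterministic distribution and the Λ-bounded symmetric hypothesis set, the pointwise difference between the best-in-class conditional exponential-loss risk and the conditional risk over all measurable functions equals e^{−Λ} at every point, so the approximation error exceeds the minimizability gap by e^{−Λ}. -/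
lemma iInf_exp_comp (f : ℝ → ℝ) (hf : Function.Surjective f) :
    (⨅ t : ℝ, Real.exp (f t)) = 0 := by
  have hbdd : BddBelow (Set.range fun t : ℝ => Real.exp (f t)) :=
    ⟨0, by rintro x ⟨t, rfl⟩; exact (Real.exp_pos _).le⟩
  refine le_antisymm ?_ (le_ciInf fun t => (Real.exp_pos _).le)
  refine le_of_forall_gt_imp_ge_of_dense fun ε hε => ?_
  obtain ⟨t, ht⟩ := hf (Real.log ε)
  calc (⨅ t : ℝ, Real.exp (f t)) ≤ Real.exp (f t) := ciInf_le hbdd t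
    _ = ε := by rw [ht, Real.exp_log hε]

/-- **Proposition (strict gap between approximation error and minimizability gap for the
exponential loss).** For `Λ > 0` and `η ∈ {0,1}`, the infimum over `t ∈ [-Λ, Λ]` of
`η e^{-t} + (1-η) e^{t}` exceeds the infimum over all `t ∈ ℝ` by exactly `e^{-Λ}`. -/
theorem stmt_16 (Λ η : ℝ) (hΛ : 0 < Λ) (hη : η = 0 ∨ η = 1) :
    sInf ((fun t => η * Real.exp (-t) + (1 - η) * Real.exp t) '' Set.Icc (-Λ) Λ)
        - (⨅ t : ℝ, η * Real.exp (-t) + (1 - η) * Real.exp t)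
      = Real.exp (-Λ) := by
  rcases hη with rfl | rfl
  · simp only [zero_mul, zero_add, sub_zero, one_mul]
    have h2 : (⨅ t : ℝ, Real.exp t) = 0 := by
      simpa using iInf_exp_comp id Function.surjective_id
    have h1 : sInf ((fun t => Real.exp t) '' Set.Icc (-Λ) Λ) = Real.exp (-Λ) := by
      apply IsLeast.csInf_eq
      constructor
      · exact ⟨-Λ, ⟨le_refl _, by linarith⟩, rfl⟩
      · rintro x ⟨t, ht, rfl⟩
        exact Real.exp_le_exp.mpr ht.1
    rw [h1, h2, sub_zero]
  · simp only [sub_self, zero_mul, add_zero, one_mul]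
    have h2 : (⨅ t : ℝ, Real.exp (-t)) = 0 :=
      iInf_exp_comp (fun t => -t) neg_surjective
    have h1 : sInf ((fun t => Real.exp (-t)) '' Set.Icc (-Λ) Λ) = Real.exp (-Λ) := by
      apply IsLeast.csInf_eq
      constructor
      · exact ⟨Λ, ⟨by linarith, le_refl _⟩, rfl⟩
      · rintro x ⟨t, ht, rfl⟩
        exact Real.exp_le_exp.mpr (by linarith [ht.2])
    rw [h1, h2, sub_zero]
end
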